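/- arXiv:2007.03845 — 11 statements merged into one kernel-verified Lean document; each statement's English description precedes it below -/
import Mathlib

section
/- Let K be a field, G a group, and V a K-linear representation of G. Assume that V is semisimple as a module over the group algebra K[G]. Then the composition of the inclusion of the invariant subspace V^G into V with the canonical quotient map from V onto the coinvariants V_G is a K-linear isomorphism from V^G onto V_G. -/
/-- For a representation `ρ` of a group on a `K`-vector space `V`, the type synonym
`ρ.asModule` (which is `V` as a module over the group algebra) is an additive group. -/
instance repAsModuleAddCommGroup {K G V : Type*} [CommSemiring K] [Monoid G]
    [AddCommGroup V] [Module K V] (ρ : Representation K G V) :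
    AddCommGroup ρ.asModule := inferInstanceAs (AddCommGroup V)

section aux

variable {K : Type*} [Field K] {G : Type*} [Group G]
    {V : Type*} [AddCommGroup V] [Module K V] (ρ : Representation K G V)

/-- The identity map from the type synonym to `V`. -/
def toV : ρ.asModule → V := id

/-- The identity map from `V` to the type synonym. -/
def toM : V → ρ.asModule := id

@[simp] lemma toV_toM (v : V) : toV ρ (toM ρ v) = v := rfl
@[simp] lemma toM_toV (x : ρ.asModule) : toM ρ (toV ρ x) = x := rfl
@[simp] lemma toV_add (x y : ρ.asModule) : toV ρ (x + y) = toV ρ x + toV ρ y := rfl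
@[simp] lemma toV_sub (x y : ρ.asModule) : toV ρ (x - y) = toV ρ x - toV ρ y := rfl
@[simp] lemma toV_neg (x : ρ.asModule) : toV ρ (-x) = -(toV ρ x) := rfl
@[simp] lemma toV_zero : toV ρ (0 : ρ.asModule) = 0 := rfl
@[simp] lemma toV_eq_zero (x : ρ.asModule) : toV ρ x = 0 ↔ x = 0 := Iff.rfl

lemma toV_smul (r : MonoidAlgebra K G) (x : ρ.asModule) :
    toV ρ (r • x) = ρ.asAlgebraHom r (toV ρ x) := rfl

lemma toV_of_smul (g : G) (x : ρ.asModule) :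
    toV ρ (MonoidAlgebra.of K G g • x) = ρ g (toV ρ x) := by
  rw [toV_smul, Representation.asAlgebraHom_of]

lemma toV_ksmul (k : K) (x : ρ.asModule) : toV ρ ((k : K) • x) = k • toV ρ x := rfl

lemma toV_injective : Function.Injective (toV ρ) := fun _ _ h => h

lemma ksmul_eq_algebraMap_smul (k : K) (x : ρ.asModule) :
    (k : K) • x = (algebraMap K (MonoidAlgebra K G)) k • x := by
  apply toV_injective ρ
  rw [toV_smul, AlgHom.commutes, Module.algebraMap_end_apply]
  rfl

/-- Lift a `ρ`-stable `K`-submodule to a submodule over the group algebra. -/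
def auxLift (p : Submodule K V) (hp : ∀ g v, v ∈ p → ρ g v ∈ p) :
    Submodule (MonoidAlgebra K G) ρ.asModule where
  carrier := {x : ρ.asModule | toV ρ x ∈ p}
  add_mem' := fun h1 h2 => p.add_mem h1 h2
  zero_mem' := p.zero_mem
  smul_mem' := by
    intro r x hx
    show toV ρ (r • x) ∈ p
    rw [toV_smul]
    induction r using MonoidAlgebra.induction_on with
    | of g => simpa [Representation.asAlgebraHom_of] using hp g (toV ρ x) hx
    | add f g hf hg => simpa [map_add] using p.add_mem hf hg
    | smul k f hf => simpa [map_smul] using p.smul_mem k hf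

@[simp] lemma mem_auxLift (p : Submodule K V) (hp : ∀ g v, v ∈ p → ρ g v ∈ p)
    (x : ρ.asModule) : x ∈ auxLift ρ p hp ↔ toV ρ x ∈ p := Iff.rfl

end aux

/-- if `V` is a `K`-linear representation of a group `G` which is semisimple
as a module over the group algebra `K[G]`, then the composition of the inclusion
`V^G → V` with the quotient map `V → V_G` onto the coinvariants (the quotient of `V`
by the span of the elements `g • v - v`) is a `K`-linear isomorphism. -/
theorem stmt0 {K : Type*} [Field K] {G : Type*} [Group G]
    {V : Type*} [AddCommGroup V] [Module K V] (ρ : Representation K G V)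
    (hss : IsSemisimpleModule (MonoidAlgebra K G) ρ.asModule) :
    Function.Bijective
      ((Submodule.span K {x : V | ∃ (g : G) (v : V), ρ g v - v = x}).mkQ ∘ₗ
        ρ.invariants.subtype) := by
  set S : Set V := {x : V | ∃ (g : G) (v : V), ρ g v - v = x} with hS
  set N : Submodule K V := Submodule.span K S with hN
  have hNstab : ∀ g v, v ∈ N → ρ g v ∈ N := by
    intro g v hv
    induction hv using Submodule.span_induction with
    | mem x hx =>
      obtain ⟨h, w, rfl⟩ := hx
      have : ρ g (ρ h w - w) = (ρ (g * h) w - w) - (ρ g w - w) := by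
        simp [map_mul]
      rw [this]
      exact sub_mem (Submodule.subset_span ⟨g * h, w, rfl⟩)
        (Submodule.subset_span ⟨g, w, rfl⟩)
    | zero => simp
    | add x y _ _ hx hy => rw [map_add]; exact add_mem hx hy
    | smul k x _ hx => rw [map_smul]; exact N.smul_mem k hx
  have hIstab : ∀ g v, v ∈ ρ.invariants → ρ g v ∈ ρ.invariants := by
    intro g v hv
    rw [hv g]
    exact hv
  set N' : Submodule (MonoidAlgebra K G) ρ.asModule := auxLift ρ N hNstab with hN'
  set I' : Submodule (MonoidAlgebra K G) ρ.asModule := auxLift ρ ρ.invariants hIstab with hI'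
  constructor
  · -- injectivity
    obtain ⟨D, hD⟩ := exists_isCompl I'
    set π := I'.linearProjOfIsCompl D hD with hπ
    have hker : ∀ v : V, v ∈ N → π (toM ρ v) = 0 := by
      intro v hv
      induction hv using Submodule.span_induction with
      | mem y hy =>
        obtain ⟨g, w, rfl⟩ := hy
        have h1 : toM ρ (ρ g w - w) =
            MonoidAlgebra.of K G g • toM ρ w - toM ρ w := by
          apply toV_injective ρ
          rw [toV_sub, toV_of_smul, toV_toM, toV_toM]
        rw [h1, map_sub, map_smul]
        have h2 : MonoidAlgebra.of K G g • π (toM ρ w) = π (toM ρ w) := by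
          apply Subtype.ext
          rw [Submodule.coe_smul]
          apply toV_injective ρ
          rw [toV_of_smul]
          exact (π (toM ρ w)).2 g
        rw [h2, sub_self]
      | zero => exact map_zero π
      | add a b _ _ ha hb =>
        have : toM ρ (a + b) = toM ρ a + toM ρ b := rfl
        rw [this, map_add, ha, hb, add_zero]
      | smul k a _ ha =>
        have h1 : toM ρ (k • a) = (algebraMap K (MonoidAlgebra K G)) k • toM ρ a := by
          apply toV_injective ρ
          rw [toV_smul, AlgHom.commutes, Module.algebraMap_end_apply]
          rfl
        rw [h1, map_smul, ha, smul_zero]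
    rw [injective_iff_map_eq_zero]
    intro x hx
    have hxN : (x : V) ∈ N := by
      have h0 : N.mkQ (x : V) = 0 := hx
      rwa [Submodule.mkQ_apply, Submodule.Quotient.mk_eq_zero] at h0
    have hxI : toM ρ (x : V) ∈ I' := by
      rw [hI', mem_auxLift]
      exact x.2
    have h1 : π (toM ρ (x : V)) = ⟨toM ρ (x : V), hxI⟩ :=
      Submodule.linearProjOfIsCompl_apply_left hD ⟨toM ρ (x : V), hxI⟩
    have h2 : π (toM ρ (x : V)) = 0 := hker _ hxN
    have h3 : toM ρ (x : V) = 0 := by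
      have := h1.symm.trans h2
      exact congrArg Subtype.val this
    exact Subtype.ext (congrArg (toV ρ) h3)
  · -- surjectivity
    obtain ⟨C, hC⟩ := exists_isCompl N'
    have hCinv : ∀ c ∈ C, toV ρ c ∈ ρ.invariants := by
      intro c hc g
      have h1 : ρ g (toV ρ c) - toV ρ c ∈ N :=
        Submodule.subset_span ⟨g, toV ρ c, rfl⟩
      have heq : toM ρ (ρ g (toV ρ c) - toV ρ c) =
          MonoidAlgebra.of K G g • c - c := by
        apply toV_injective ρ
        rw [toV_sub, toV_of_smul, toV_toM]
      have h2 : toM ρ (ρ g (toV ρ c) - toV ρ c) ∈ C := by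
        rw [heq]
        exact sub_mem (C.smul_mem _ hc) hc
      have h3 : toM ρ (ρ g (toV ρ c) - toV ρ c) ∈ N' ⊓ C :=
        ⟨h1, h2⟩
      rw [hC.inf_eq_bot, Submodule.mem_bot] at h3
      have h4 : ρ g (toV ρ c) - toV ρ c = 0 := by
        have := congrArg (toV ρ) h3
        rwa [toV_toM] at this
      exact sub_eq_zero.mp h4
    intro y
    obtain ⟨v, rfl⟩ := N.mkQ_surjective y
    have hv : toM ρ v ∈ N' ⊔ C := by rw [hC.sup_eq_top]; trivial
    obtain ⟨n, hn, c, hc, hnc⟩ := Submodule.mem_sup.mp hv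
    refine ⟨⟨toV ρ c, hCinv c hc⟩, ?_⟩
    show N.mkQ (toV ρ c) = N.mkQ v
    rw [Submodule.mkQ_apply, Submodule.mkQ_apply, Submodule.Quotient.eq]
    have hveq : toV ρ n + toV ρ c = v := by
      have := congrArg (toV ρ) hnc
      rwa [toV_add, toV_toM] at this
    have heq : toV ρ c - v = -(toV ρ n) := by rw [← hveq]; abel
    rw [heq]
    exact N.neg_mem hn
end

section
/- Let K be a field, let G and H be groups acting K-linearly on a K-vector space V with commuting actions (equivalently, V is a representation of G × H). Assume V is semisimple as a K[G]-module, as a K[H]-module, and as a K[G×H]-module. Then: (1) the composition of the inclusion V^{G×H} ⊆ V^G with the quotient map V^G → (V^G)_H is a K-linear isomorphism onto (V^G)_H; and (2) the composition of the inclusion V^{G×H} ⊆ V with the quotient map V → V_H is injective with image exactly the G-invariants (V_H)^G of the coinvariant space V_H (on which G acts naturally). -/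
section Defs

variable {K G H V : Type*} [Field K] [Group G] [Group H]
  [AddCommGroup V] [Module K V]

/-- Two commuting representations of `G` and of `H` on `V` assemble into a representation
of `G × H` on `V`. -/
@[simps]
def prodRep (ρ : Representation K G V) (τ : Representation K H V)
    (hcomm : ∀ (g : G) (h : H), ρ g ∘ₗ τ h = τ h ∘ₗ ρ g) :
    Representation K (G × H) V where
  toFun p := ρ p.1 ∘ₗ τ p.2
  map_one' := by
    ext v
    simp
  map_mul' p q := by
    ext v
    have hc := LinearMap.congr_fun (hcomm q.1 p.2) (τ q.2 v)
    simp only [LinearMap.comp_apply] at hc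
    simp only [Prod.fst_mul, Prod.snd_mul, map_mul, Module.End.mul_apply,
      LinearMap.comp_apply]
    rw [hc]

/-- `V^{G×H}` is contained in `V^G`. -/
lemma prodRep_invariants_le (ρ : Representation K G V) (τ : Representation K H V)
    (hcomm : ∀ (g : G) (h : H), ρ g ∘ₗ τ h = τ h ∘ₗ ρ g) :
    (prodRep ρ τ hcomm).invariants ≤ ρ.invariants := by
  intro v hv
  rw [Representation.mem_invariants] at hv ⊢
  intro g
  have h := hv (g, 1)
  simpa using h

/-- The natural action of `H` on the invariant subspace `V^G`, for commuting actions of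
`G` and `H` on `V`. -/
noncomputable def resInvRep (ρ : Representation K G V) (τ : Representation K H V)
    (hcomm : ∀ (g : G) (h : H), ρ g ∘ₗ τ h = τ h ∘ₗ ρ g) :
    Representation K H ρ.invariants where
  toFun h := LinearMap.restrict (τ h) (p := ρ.invariants) (q := ρ.invariants)
    (fun v hv => by
      rw [Representation.mem_invariants] at hv ⊢
      intro g
      have hc := LinearMap.congr_fun (hcomm g h) v
      simp only [LinearMap.comp_apply] at hc
      rw [hc, hv g])
  map_one' := by
    ext v
    simp [LinearMap.restrict_coe_apply]
  map_mul' h h' := by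
    ext v
    simp [LinearMap.restrict_coe_apply]

/-- The span whose quotient defines the coinvariants `V_H`. -/
def coinvSpan (K : Type*) {H V : Type*} [Field K] [Group H]
    [AddCommGroup V] [Module K V] (τ : Representation K H V) : Submodule K V :=
  Submodule.span K {x : V | ∃ (h : H) (v : V), τ h v - v = x}

end Defs

section QuotRep

variable {K G H V : Type*} [Field K] [Group G] [Group H]
  [AddCommGroup V] [Module K V]

lemma coinvSpan_le_comap (ρ : Representation K G V) (τ : Representation K H V)
    (hcomm : ∀ (g : G) (h : H), ρ g ∘ₗ τ h = τ h ∘ₗ ρ g) (g : G) :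
    coinvSpan K τ ≤ (coinvSpan K τ).comap (ρ g) := by
  rw [coinvSpan, Submodule.span_le]
  rintro x ⟨h, v, rfl⟩
  have hc := LinearMap.congr_fun (hcomm g h) v
  simp only [LinearMap.comp_apply] at hc
  simp only [SetLike.mem_coe, Submodule.mem_comap, map_sub, hc]
  exact Submodule.subset_span ⟨h, ρ g v, rfl⟩

/-- The natural action of `G` on the coinvariant space `V_H`, for commuting actions of
`G` and `H` on `V`. -/
noncomputable def quotRep (ρ : Representation K G V) (τ : Representation K H V)
    (hcomm : ∀ (g : G) (h : H), ρ g ∘ₗ τ h = τ h ∘ₗ ρ g) :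
    Representation K G (V ⧸ coinvSpan K τ) where
  toFun g := Submodule.mapQ _ _ (ρ g) (coinvSpan_le_comap ρ τ hcomm g)
  map_one' := by
    apply Submodule.linearMap_qext
    ext v
    simp [Submodule.mapQ_apply]
  map_mul' g g' := by
    apply Submodule.linearMap_qext
    ext v
    simp [Submodule.mapQ_apply]

end QuotRep

section Aux

variable {K H V : Type*} [Field K] [Group H] [AddCommGroup V] [Module K V]

lemma asModule_smul_def (τ : Representation K H V) (a : MonoidAlgebra K H)
    (v : τ.asModule) : (a • v : V) = τ.asAlgebraHom a v := rfl

/-- An `H`-stable `K`-submodule of `V` as a `MonoidAlgebra K H`-submodule of `τ.asModule`. -/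
def stableSubmodule (τ : Representation K H V) (p : Submodule K V)
    (hp : ∀ (h : H) v, v ∈ p → τ h v ∈ p) :
    Submodule (MonoidAlgebra K H) τ.asModule where
  carrier := {v : τ.asModule | (v : V) ∈ p}
  add_mem' := fun ha hb => p.add_mem ha hb
  zero_mem' := p.zero_mem
  smul_mem' := fun a v hv => by
    show τ.asAlgebraHom a v ∈ p
    induction a using MonoidAlgebra.induction with
    | zero => rw [map_zero]; exact p.zero_mem
    | single_add h k b _ _ ih =>
      rw [map_add]
      refine p.add_mem ?_ ih
      rw [Representation.asAlgebraHom_single]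
      exact p.smul_mem k (hp h v hv)

lemma mem_stableSubmodule {τ : Representation K H V} {p : Submodule K V}
    {hp : ∀ (h : H) v, v ∈ p → τ h v ∈ p} {v : τ.asModule} :
    v ∈ stableSubmodule τ p hp ↔ (v : V) ∈ p := Iff.rfl

lemma coinvSpan_stable (τ : Representation K H V) (h : H) {v : V}
    (hv : v ∈ coinvSpan K τ) : τ h v ∈ coinvSpan K τ := by
  revert hv
  suffices hle : coinvSpan K τ ≤ (coinvSpan K τ).comap (τ h) by
    exact fun hv => hle hv
  rw [coinvSpan, Submodule.span_le]
  rintro x ⟨h', w, rfl⟩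
  simp only [SetLike.mem_coe, Submodule.mem_comap, map_sub]
  have h1 : τ h (τ h' w) = τ (h * h') w := by rw [map_mul]; rfl
  have h2 : τ h (τ h' w) - τ h w = (τ (h * h') w - w) - (τ h w - w) := by rw [h1]; abel
  rw [h2]
  exact Submodule.sub_mem _ (Submodule.subset_span ⟨h * h', w, rfl⟩)
    (Submodule.subset_span ⟨h, w, rfl⟩)

lemma asModule_single_smul (τ : Representation K H V) (h : H) (v : τ.asModule) :
    ((MonoidAlgebra.single h (1:K)) • v : V) = τ h v := by
  rw [asModule_smul_def, Representation.asAlgebraHom_single, one_smul]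

/-- Core lemma: for a semisimple representation, invariants and the coinvariant span
are complementary. -/
lemma isCompl_invariants_coinvSpan (τ : Representation K H V)
    (hss : IsSemisimpleModule (MonoidAlgebra K H) τ.asModule) :
    IsCompl τ.invariants (coinvSpan K τ) := by
  constructor
  · -- disjoint
    rw [disjoint_iff_inf_le]
    intro v hv
    set W : Submodule K V := τ.invariants ⊓ coinvSpan K τ with hW
    have hWstable : ∀ (h : H) w, w ∈ W → τ h w ∈ W := by
      intro h w hw
      have h1 : τ h w = w := hw.1 h
      rw [h1]; exact hw
    set W' := stableSubmodule τ W hWstable with hW'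
    obtain ⟨E, hE⟩ := exists_isCompl W'
    set π := Submodule.projectionOnto W' E hE with hπ
    set e := τ.asModuleEquiv with he
    let φ : V →ₗ[K] V :=
      { toFun := fun v => e ((π (e.symm v)).1)
        map_add' := fun a b => by simp only [map_add, Submodule.coe_add]
        map_smul' := fun k v => by
          simp only [RingHom.id_apply, he]
          rw [Representation.asModuleEquiv_symm_map_smul, map_smul, Submodule.coe_smul,
            Representation.asModuleEquiv_map_smul]
          simp [MonoidAlgebra.coe_algebraMap, Representation.asAlgebraHom_single] }
    have hφτ : ∀ (h : H) (v : V), φ (τ h v) = φ v := by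
      intro h v
      show e ((π (e.symm (τ h v))).1) = e ((π (e.symm v)).1)
      rw [Representation.asModuleEquiv_symm_map_rho, map_smul, Submodule.coe_smul,
        Representation.asModuleEquiv_map_smul]
      have hinv : e ((π (e.symm v)).1) ∈ τ.invariants := ((π (e.symm v)).2 : _ ∈ W).1
      rw [MonoidAlgebra.of_apply, Representation.asAlgebraHom_single, one_smul]
      exact hinv h
    have hker : coinvSpan K τ ≤ LinearMap.ker φ := by
      rw [coinvSpan, Submodule.span_le]
      rintro x ⟨h, w, rfl⟩
      simp only [SetLike.mem_coe, LinearMap.mem_ker, map_sub, hφτ h w, sub_self]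
    have hvW : (e.symm v) ∈ W' := hv
    have h1 : φ v = v := by
      show e ((π (e.symm v)).1) = v
      rw [Submodule.projectionOnto_apply_left hE (⟨e.symm v, hvW⟩ : W')]
      rfl
    have h2 : φ v = 0 := hker hv.2
    rw [h2] at h1
    rw [← h1]; exact Submodule.zero_mem _
  · -- codisjoint
    rw [codisjoint_iff, eq_top_iff]
    intro v _
    set C' := stableSubmodule τ (coinvSpan K τ) (coinvSpan_stable τ) with hC'
    obtain ⟨D, hD⟩ := exists_isCompl C'
    set e := τ.asModuleEquiv with he
    have hDinv : ∀ w : τ.asModule, w ∈ D → e w ∈ τ.invariants := by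
      intro w hw
      rw [Representation.mem_invariants]
      intro h
      have h0 : τ h (e w) - e w = e (MonoidAlgebra.of K H h • w - w) := by
        rw [map_sub, Representation.asModuleEquiv_map_smul, MonoidAlgebra.of_apply,
          Representation.asAlgebraHom_single, one_smul]
      have h1 : (MonoidAlgebra.of K H h • w - w : τ.asModule) ∈ C' := by
        show e (MonoidAlgebra.of K H h • w - w) ∈ coinvSpan K τ
        exact Submodule.subset_span ⟨h, e w, h0⟩
      have h2 : (MonoidAlgebra.of K H h • w - w : τ.asModule) ∈ D :=
        Submodule.sub_mem _ (D.smul_mem _ hw) hw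
      have h4 := hD.disjoint.le_bot (Submodule.mem_inf.mpr ⟨h1, h2⟩)
      rw [Submodule.mem_bot] at h4
      have h5 : τ h (e w) - e w = 0 := by rw [h0, h4, map_zero]
      exact sub_eq_zero.mp h5
    have hv' : (e.symm v) ∈ C' ⊔ D := by rw [hD.sup_eq_top]; trivial
    rw [Submodule.mem_sup] at hv'
    obtain ⟨c, hc, d, hd, hcd⟩ := hv'
    rw [Submodule.mem_sup]
    refine ⟨e d, hDinv d hd, e c, hc, ?_⟩
    rw [← map_add, add_comm d c, hcd]
    exact e.apply_symm_apply v

lemma mkQ_comp_subtype_bijective {p q : Submodule K V} (h : IsCompl p q) :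
    Function.Bijective (q.mkQ ∘ₗ p.subtype) := by
  constructor
  · intro a b hab
    simp only [LinearMap.comp_apply, Submodule.subtype_apply, Submodule.mkQ_apply] at hab
    rw [Submodule.Quotient.eq] at hab
    have h1 : (a : V) - b ∈ p := p.sub_mem a.2 b.2
    have h2 := h.disjoint.le_bot (Submodule.mem_inf.mpr ⟨h1, hab⟩)
    rw [Submodule.mem_bot] at h2
    exact Subtype.ext (sub_eq_zero.mp h2)
  · intro x
    obtain ⟨v, rfl⟩ := Submodule.mkQ_surjective q x
    have hv : (v : V) ∈ p ⊔ q := by rw [h.sup_eq_top]; trivial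
    rw [Submodule.mem_sup] at hv
    obtain ⟨a, ha, b, hb, hab⟩ := hv
    refine ⟨⟨a, ha⟩, ?_⟩
    simp only [LinearMap.comp_apply, Submodule.subtype_apply, Submodule.mkQ_apply]
    rw [← hab, Submodule.Quotient.eq]
    simpa using hb

end Aux

section Main

variable {K G H V : Type*} [Field K] [Group G] [Group H] [AddCommGroup V] [Module K V]

lemma invariants_stable (ρ : Representation K G V) (τ : Representation K H V)
    (hcomm : ∀ (g : G) (h : H), ρ g ∘ₗ τ h = τ h ∘ₗ ρ g) (h : H) (v : V)
    (hv : v ∈ ρ.invariants) : τ h v ∈ ρ.invariants := by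
  rw [Representation.mem_invariants] at hv ⊢
  intro g
  have hc := LinearMap.congr_fun (hcomm g h) v
  simp only [LinearMap.comp_apply] at hc
  rw [hc, hv g]

lemma resInvRep_asAlgebraHom_coe (ρ : Representation K G V) (τ : Representation K H V)
    (hcomm : ∀ (g : G) (h : H), ρ g ∘ₗ τ h = τ h ∘ₗ ρ g)
    (a : MonoidAlgebra K H) (x : ρ.invariants) :
    (((resInvRep ρ τ hcomm).asAlgebraHom a x : ρ.invariants) : V) =
      τ.asAlgebraHom a (x : V) := by
  induction a using MonoidAlgebra.induction with
  | zero => simp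
  | single_add h k b _ _ ih =>
    rw [map_add, map_add, LinearMap.add_apply, LinearMap.add_apply, Submodule.coe_add, ih,
      Representation.asAlgebraHom_single, Representation.asAlgebraHom_single,
      LinearMap.smul_apply, LinearMap.smul_apply, SetLike.val_smul]
    congr 1

lemma resInvRep_semisimple (ρ : Representation K G V) (τ : Representation K H V)
    (hcomm : ∀ (g : G) (h : H), ρ g ∘ₗ τ h = τ h ∘ₗ ρ g)
    (hH : IsSemisimpleModule (MonoidAlgebra K H) τ.asModule) :
    IsSemisimpleModule (MonoidAlgebra K H) (resInvRep ρ τ hcomm).asModule := by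
  haveI := hH
  set p' := stableSubmodule τ ρ.invariants (invariants_stable ρ τ hcomm) with hp'
  let eq : (resInvRep ρ τ hcomm).asModule ≃ₗ[MonoidAlgebra K H] p' :=
    { toFun := fun x => ⟨x.1, x.2⟩
      invFun := fun y => ⟨y.1, y.2⟩
      left_inv := fun x => rfl
      right_inv := fun y => rfl
      map_add' := fun x y => rfl
      map_smul' := fun a x => Subtype.ext (resInvRep_asAlgebraHom_coe ρ τ hcomm a x) }
  exact IsSemisimpleModule.congr eq

lemma mem_prodRep_invariants {ρ : Representation K G V} {τ : Representation K H V}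
    {hcomm : ∀ (g : G) (h : H), ρ g ∘ₗ τ h = τ h ∘ₗ ρ g} {v : V} :
    v ∈ (prodRep ρ τ hcomm).invariants ↔ (∀ g : G, ρ g v = v) ∧ ∀ h : H, τ h v = v := by
  rw [Representation.mem_invariants]
  constructor
  · intro hv
    constructor
    · intro g
      have := hv (g, 1)
      simpa using this
    · intro h
      have := hv (1, h)
      simpa using this
  · rintro ⟨h1, h2⟩ ⟨g, h⟩
    simp [h2 h, h1 g]

end Main


/-- for commuting semisimple actions of `G` and `H` on `V` with the product
action of `G × H` also semisimple: (1) the composition `V^{G×H} ⊆ V^G → (V^G)_H` is a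
`K`-linear isomorphism, and (2) the composition `V^{G×H} ⊆ V → V_H` is injective with
image exactly the `G`-invariants `(V_H)^G`. -/
theorem stmt1 {K : Type*} [Field K] {G H : Type*} [Group G] [Group H]
    {V : Type*} [AddCommGroup V] [Module K V]
    (ρ : Representation K G V) (τ : Representation K H V)
    (hcomm : ∀ (g : G) (h : H), ρ g ∘ₗ τ h = τ h ∘ₗ ρ g)
    (hG : IsSemisimpleModule (MonoidAlgebra K G) ρ.asModule)
    (hH : IsSemisimpleModule (MonoidAlgebra K H) τ.asModule)
    (hGH : IsSemisimpleModule (MonoidAlgebra K (G × H)) (prodRep ρ τ hcomm).asModule) :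
    Function.Bijective
      ((Submodule.span K {x : ρ.invariants | ∃ (h : H) (v : ρ.invariants),
          resInvRep ρ τ hcomm h v - v = x}).mkQ ∘ₗ
        Submodule.inclusion (prodRep_invariants_le ρ τ hcomm)) ∧
    Function.Injective ((coinvSpan K τ).mkQ ∘ₗ (prodRep ρ τ hcomm).invariants.subtype) ∧
    LinearMap.range ((coinvSpan K τ).mkQ ∘ₗ (prodRep ρ τ hcomm).invariants.subtype) =
      (quotRep ρ τ hcomm).invariants := by
  classical
  have hcplσ : IsCompl (resInvRep ρ τ hcomm).invariants (coinvSpan K (resInvRep ρ τ hcomm)) :=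
    isCompl_invariants_coinvSpan _ (resInvRep_semisimple ρ τ hcomm hH)
  have hcplτ : IsCompl τ.invariants (coinvSpan K τ) := isCompl_invariants_coinvSpan τ hH
  have hS : Submodule.span K {x : ρ.invariants | ∃ (h : H) (v : ρ.invariants),
      resInvRep ρ τ hcomm h v - v = x} = coinvSpan K (resInvRep ρ τ hcomm) := rfl
  have hres_coe : ∀ (h : H) (x : ρ.invariants),
      ((resInvRep ρ τ hcomm h x : ρ.invariants) : V) = τ h (x : V) := fun h x => rfl
  have hincl_inv : ∀ c : (prodRep ρ τ hcomm).invariants,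
      Submodule.inclusion (prodRep_invariants_le ρ τ hcomm) c ∈
        (resInvRep ρ τ hcomm).invariants := by
    intro c
    rw [Representation.mem_invariants]
    intro h
    apply Subtype.ext
    rw [hres_coe]
    exact (mem_prodRep_invariants.mp c.2).2 h
  have hq : ∀ (g : G) (v : V), quotRep ρ τ hcomm g (Submodule.Quotient.mk v) =
      Submodule.Quotient.mk (ρ g v) := by
    intro g v
    show Submodule.mapQ _ _ (ρ g) (coinvSpan_le_comap ρ τ hcomm g)
      (Submodule.Quotient.mk v) = _
    rw [Submodule.mapQ_apply]
  refine ⟨⟨?_, ?_⟩, ?_, ?_⟩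
  · -- injectivity, statement 1
    intro a b hab
    simp only [LinearMap.comp_apply, Submodule.mkQ_apply] at hab
    rw [Submodule.Quotient.eq, hS] at hab
    have h1 : Submodule.inclusion (prodRep_invariants_le ρ τ hcomm) a -
        Submodule.inclusion (prodRep_invariants_le ρ τ hcomm) b ∈
        (resInvRep ρ τ hcomm).invariants :=
      Submodule.sub_mem _ (hincl_inv a) (hincl_inv b)
    have h2 := hcplσ.disjoint.le_bot (Submodule.mem_inf.mpr ⟨h1, hab⟩)
    rw [Submodule.mem_bot, sub_eq_zero] at h2
    exact Submodule.inclusion_injective _ h2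
  · -- surjectivity, statement 1
    intro x
    obtain ⟨y, rfl⟩ := Submodule.mkQ_surjective _ x
    have hy : y ∈ (resInvRep ρ τ hcomm).invariants ⊔ coinvSpan K (resInvRep ρ τ hcomm) := by
      rw [hcplσ.sup_eq_top]; trivial
    rw [Submodule.mem_sup] at hy
    obtain ⟨i, hi, s, hs, rfl⟩ := hy
    rw [Representation.mem_invariants] at hi
    have hi1 : (i : V) ∈ (prodRep ρ τ hcomm).invariants := by
      rw [mem_prodRep_invariants]
      constructor
      · intro g
        exact i.2 g
      · intro h
        have h1 := congrArg Subtype.val (hi h)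
        rwa [hres_coe] at h1
    refine ⟨⟨(i : V), hi1⟩, ?_⟩
    simp only [LinearMap.comp_apply, Submodule.mkQ_apply]
    rw [Submodule.Quotient.eq, hS]
    have h2 : Submodule.inclusion (prodRep_invariants_le ρ τ hcomm) ⟨(i : V), hi1⟩ = i :=
      Subtype.ext rfl
    rw [h2]
    have h3 : i - (i + s) = -s := by abel
    rw [h3]
    exact Submodule.neg_mem _ hs
  · -- injectivity, statement 2
    intro a b hab
    simp only [LinearMap.comp_apply, Submodule.mkQ_apply, Submodule.subtype_apply] at hab
    rw [Submodule.Quotient.eq] at hab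
    have ha : (a : V) ∈ τ.invariants := by
      rw [Representation.mem_invariants]
      exact (mem_prodRep_invariants.mp a.2).2
    have hb : (b : V) ∈ τ.invariants := by
      rw [Representation.mem_invariants]
      exact (mem_prodRep_invariants.mp b.2).2
    have h2 := hcplτ.disjoint.le_bot
      (Submodule.mem_inf.mpr ⟨Submodule.sub_mem _ ha hb, hab⟩)
    rw [Submodule.mem_bot, sub_eq_zero] at h2
    exact Subtype.ext h2
  · -- range, statement 2
    apply le_antisymm
    · rintro x ⟨v, rfl⟩
      rw [Representation.mem_invariants]
      intro g
      simp only [LinearMap.comp_apply, Submodule.subtype_apply, Submodule.mkQ_apply]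
      rw [hq]
      congr 1
      exact (mem_prodRep_invariants.mp v.2).1 g
    · intro x hx
      obtain ⟨y, rfl⟩ := Submodule.mkQ_surjective (coinvSpan K τ) x
      have hy : y ∈ τ.invariants ⊔ coinvSpan K τ := by rw [hcplτ.sup_eq_top]; trivial
      rw [Submodule.mem_sup] at hy
      obtain ⟨w, hw, s, hs, rfl⟩ := hy
      have hmk : ((coinvSpan K τ).mkQ) (w + s) = Submodule.Quotient.mk w := by
        rw [Submodule.mkQ_apply, Submodule.Quotient.eq]
        have : w + s - w = s := by abel
        rw [this]; exact hs
      rw [Representation.mem_invariants] at hx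
      have hw' : ∀ h : H, τ h w = w := (Representation.mem_invariants τ w).mp hw
      have hρst : ∀ g : G, ρ g w ∈ τ.invariants := by
        intro g
        rw [Representation.mem_invariants]
        intro h
        have hc := LinearMap.congr_fun (hcomm g h) w
        simp only [LinearMap.comp_apply] at hc
        rw [← hc, hw' h]
      have hwg : ∀ g : G, ρ g w = w := by
        intro g
        have h1 := hx g
        rw [hmk, hq] at h1
        have h2 := (Submodule.Quotient.eq _).mp h1
        have h3 : ρ g w - w ∈ τ.invariants := Submodule.sub_mem _ (hρst g) hw
        have h4 := hcplτ.disjoint.le_bot (Submodule.mem_inf.mpr ⟨h3, h2⟩)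
        rw [Submodule.mem_bot, sub_eq_zero] at h4
        exact h4
      have hwmem : w ∈ (prodRep ρ τ hcomm).invariants :=
        mem_prodRep_invariants.mpr ⟨hwg, hw'⟩
      refine ⟨⟨w, hwmem⟩, ?_⟩
      simp only [LinearMap.comp_apply, Submodule.subtype_apply, Submodule.mkQ_apply]
      rw [Submodule.Quotient.eq]
      have h5 : w - (w + s) = -s := by abel
      rw [h5]
      exact Submodule.neg_mem _ hs
end

section
/- Let K be a field, V a finite-dimensional K-vector space of dimension d, and n a natural number with n ≥ d + 1. Let ι : S_{d+1} → S_n be the embedding that lets a permutation act on the first d+1 letters and fixes the remaining letters. Then Σ_{σ ∈ S_{d+1}} sgn(σ)·L_{ι(σ)}^{(n)} = 0 in End_K(V^{⊗n}). -/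
open scoped TensorProduct

/-- The endomorphism `L_σ^{(n)}` of the `n`-th tensor power of `V`, determined by
`v_1 ⊗ ⋯ ⊗ v_n ↦ v_{σ⁻¹(1)} ⊗ ⋯ ⊗ v_{σ⁻¹(n)}`. -/
noncomputable def permMap (K : Type*) [Field K] (V : Type*) [AddCommGroup V] [Module K V]
    (n : ℕ) (σ : Equiv.Perm (Fin n)) :
    (⨂[K] _ : Fin n, V) →ₗ[K] ⨂[K] _ : Fin n, V :=
  (PiTensorProduct.reindex K (fun _ : Fin n => V) σ).toLinearMap

section Aux

variable {K V : Type*} [Field K] [AddCommGroup V] [Module K V] {d n : ℕ}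

/-- Extend a family of `d+1` vectors to `n` coordinates using `v` for the tail. -/
def extFam (hn : d + 1 ≤ n) (v : Fin n → V) (w : Fin (d + 1) → V) : Fin n → V :=
  fun i => if h : (i : ℕ) < d + 1 then w ⟨i, h⟩ else v i

lemma extFam_update [inst : DecidableEq (Fin (d + 1))] (hn : d + 1 ≤ n) (v : Fin n → V) (w : Fin (d + 1) → V)
    (j : Fin (d + 1)) (x : V) :
    extFam hn v (Function.update w j x) =
      Function.update (extFam hn v w) (Fin.castLE hn j) x := by
  funext i
  by_cases hij : i = Fin.castLE hn j
  · subst hij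
    simp [extFam, Function.update_self, j.isLt]
  · rw [Function.update_of_ne hij]
    by_cases h : (i : ℕ) < d + 1
    · have hj : (⟨(i : ℕ), h⟩ : Fin (d + 1)) ≠ j := by
        intro hc
        apply hij
        ext
        simpa using congrArg Fin.val hc
      simp [extFam, h, Function.update_of_ne hj]
    · simp [extFam, h]

/-- The multilinear map `w ↦ ⊗ (extFam hn v w)`. -/
noncomputable def extML (hn : d + 1 ≤ n) (v : Fin n → V) :
    MultilinearMap K (fun _ : Fin (d + 1) => V) (⨂[K] _ : Fin n, V) where
  toFun w := PiTensorProduct.tprod K (extFam hn v w)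
  map_update_add' w j x y := by
    rw [extFam_update hn, extFam_update hn, extFam_update hn]
    exact (PiTensorProduct.tprod K).map_update_add _ _ _ _
  map_update_smul' w j c x := by
    rw [extFam_update hn, extFam_update hn]
    exact (PiTensorProduct.tprod K).map_update_smul _ _ _ _

end Aux

/-- if `dim V = d` and `n ≥ d + 1`, then
`Σ_{σ ∈ S_{d+1}} sgn(σ) • L_{ι(σ)}^{(n)} = 0`, where `ι : S_{d+1} → S_n` acts on the
first `d + 1` letters and fixes the rest. -/
theorem stmt5 (K : Type*) [Field K] (V : Type*) [AddCommGroup V] [Module K V]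
    [FiniteDimensional K V] (d n : ℕ) (hd : Module.finrank K V = d) (hn : d + 1 ≤ n) :
    ∑ σ : Equiv.Perm (Fin (d + 1)),
      ((Equiv.Perm.sign σ : ℤ) : K) • permMap K V n (σ.viaEmbedding (Fin.castLEEmb hn)) = 0 := by
  apply PiTensorProduct.ext
  ext v
  simp only [LinearMap.compMultilinearMap_apply, LinearMap.sum_apply, LinearMap.smul_apply,
    LinearMap.zero_apply, MultilinearMap.zero_apply, permMap, LinearEquiv.coe_coe,
    PiTensorProduct.reindex_tprod]
  -- the family of the first `d+1` vectors
  set w : Fin (d + 1) → V := fun j => v (Fin.castLE hn j) with hw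
  -- each term equals `domDomCongr σ⁻¹ (extML hn v)` applied to `w`
  have key : ∀ σ : Equiv.Perm (Fin (d + 1)),
      (PiTensorProduct.tprod K fun i => v ((σ.viaEmbedding (Fin.castLEEmb hn)).symm i)) =
        ((extML hn v).domDomCongr σ⁻¹ : MultilinearMap K (fun _ : Fin (d + 1) => V) _) w := by
    intro σ
    have hsymm : (σ.viaEmbedding (Fin.castLEEmb hn)).symm =
        (σ⁻¹).viaEmbedding (Fin.castLEEmb hn) := by
      have := map_inv (Equiv.Perm.viaEmbeddingHom (Fin.castLEEmb hn)) σ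
      have h2 : (σ.viaEmbedding (Fin.castLEEmb hn))⁻¹ = (σ⁻¹).viaEmbedding (Fin.castLEEmb hn) := by
        simpa [Equiv.Perm.viaEmbeddingHom_apply] using this.symm
      exact h2
    rw [hsymm]
    simp only [MultilinearMap.domDomCongr_apply, extML, MultilinearMap.coe_mk]
    congr 1
    funext i
    by_cases h : (i : ℕ) < d + 1
    · have hi : i = Fin.castLEEmb hn (⟨(i : ℕ), h⟩ : Fin (d + 1)) := by
        simp [Fin.castLEEmb]
      rw [hi, Equiv.Perm.viaEmbedding_apply]
      simp [extFam, h, hw, Fin.castLEEmb]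
    · have hi : i ∉ Set.range (Fin.castLEEmb hn) := by
        rintro ⟨j, rfl⟩
        exact h (by simpa [Fin.castLEEmb] using j.isLt)
      rw [Equiv.Perm.viaEmbedding_apply_of_notMem _ _ _ hi]
      simp [extFam, h]
  simp_rw [key]
  -- reindex the sum over `σ ↦ σ⁻¹`
  rw [← Equiv.sum_comp (Equiv.inv (Equiv.Perm (Fin (d + 1))))]
  simp only [Equiv.inv_apply, inv_inv, Equiv.Perm.sign_inv]
  have hzsmul : ∀ (σ : Equiv.Perm (Fin (d + 1))) (x : ⨂[K] _ : Fin n, V),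
      ((Equiv.Perm.sign σ : ℤ) : K) • x = Equiv.Perm.sign σ • x := by
    intro σ x
    rw [Units.smul_def, Int.cast_smul_eq_zsmul]
  simp_rw [hzsmul]
  rw [← MultilinearMap.alternatization_apply]
  apply AlternatingMap.map_linearDependent
  intro hli
  have := hli.fintype_card_le_finrank
  rw [hd, Fintype.card_fin] at this
  omega
end

section
/- Let K be an infinite field, W a nonzero finite-dimensional K-vector space, and p, q natural numbers with p ≠ q. If x : W^{⊗q} → W^{⊗p} is a K-linear map satisfying g^{⊗p} ∘ x = x ∘ g^{⊗q} for every invertible K-linear map g : W → W, then x = 0. -/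
open scoped TensorProduct

lemma map_smul_id_aux (K : Type*) [Field K] (W : Type*) [AddCommGroup W] [Module K W]
    (n : ℕ) (c : K) :
    (PiTensorProduct.map fun _ : Fin n => (c • LinearMap.id : W →ₗ[K] W)) =
      c ^ n • LinearMap.id := by
  ext f
  simp [MultilinearMap.map_smul_univ, Finset.prod_const]

/-- over an infinite field, a `K`-linear map `W^{⊗q} → W^{⊗p}` with `p ≠ q`
(`W` nonzero finite-dimensional) that intertwines `g^{⊗q}` and `g^{⊗p}` for every
invertible `g : W → W` must be zero. -/
theorem stmt6 (K : Type*) [Field K] [Infinite K] (W : Type*) [AddCommGroup W] [Module K W]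
    [Nontrivial W] [FiniteDimensional K W] (p q : ℕ) (hpq : p ≠ q)
    (x : (⨂[K] _ : Fin q, W) →ₗ[K] ⨂[K] _ : Fin p, W)
    (hx : ∀ g : W ≃ₗ[K] W,
      (PiTensorProduct.map fun _ : Fin p => g.toLinearMap) ∘ₗ x =
        x ∘ₗ (PiTensorProduct.map fun _ : Fin q => g.toLinearMap)) :
    x = 0 := by
  have hP : (Polynomial.X ^ p - Polynomial.X ^ q : Polynomial K) ≠ 0 := by
    intro h
    apply hpq
    have h2 := sub_eq_zero.mp h
    have := congrArg Polynomial.natDegree h2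
    simpa using this
  have hfin : {c : K | (Polynomial.X ^ p - Polynomial.X ^ q : Polynomial K).IsRoot c}.Finite :=
    Polynomial.finite_setOf_isRoot hP
  obtain ⟨c, hc⟩ := ((hfin.union (Set.finite_singleton 0)).infinite_compl).nonempty
  simp only [Set.mem_compl_iff, Set.mem_union, Set.mem_setOf_eq, Set.mem_singleton_iff,
    not_or, Polynomial.IsRoot] at hc
  obtain ⟨hroot, hc0⟩ := hc
  have hne : c ^ p - c ^ q ≠ 0 := by
    intro h
    apply hroot
    simp [h, Polynomial.eval_sub]
  set g : W ≃ₗ[K] W := LinearEquiv.smulOfNeZero K W c hc0 with hgdef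
  have hg : g.toLinearMap = c • LinearMap.id := by
    ext w; simp [hgdef]
  have key := hx g
  rw [hg, map_smul_id_aux, map_smul_id_aux] at key
  refine LinearMap.ext fun v => ?_
  have hkv := LinearMap.ext_iff.mp key v
  simp only [LinearMap.comp_apply, LinearMap.smul_apply, LinearMap.id_apply, map_smul] at hkv
  have hsub : (c ^ p - c ^ q) • x v = 0 := by
    rw [sub_smul, hkv, sub_self]
  rcases smul_eq_zero.mp hsub with h | h
  · exact absurd h hne
  · simpa using h
end

section
/- Let K be an infinite field of characteristic zero, and let n ≤ d be natural numbers. For permutations σ, τ ∈ S_n, the following are equivalent: (1) for every K-linear endomorphism A of K^d, Tr(L_σ^{(n)} ∘ A^{⊗n}) = Tr(L_τ^{(n)} ∘ A^{⊗n}); (2) σ and τ are conjugate in S_n. -/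
open scoped TensorProduct

/-- The endomorphism `T^{⊗n}` of the `n`-th tensor power of `V` induced by `T : V →ₗ[K] V`. -/
noncomputable def tpowMap (K : Type*) [Field K] (V : Type*) [AddCommGroup V] [Module K V]
    (n : ℕ) (T : V →ₗ[K] V) :
    (⨂[K] _ : Fin n, V) →ₗ[K] ⨂[K] _ : Fin n, V :=
  PiTensorProduct.map fun _ => T

namespace Stmt8Aux

open PiTensorProduct Finset


variable {K : Type*} [Field K] {n d : ℕ}

/-- elementary multilinear map -/
noncomputable def tMul (K : Type*) [Field K] (n d : ℕ) :
    MultilinearMap K (fun _ : Fin n => (Fin d → K)) ((Fin n → Fin d) → K) :=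
  MultilinearMap.pi fun f =>
    (MultilinearMap.mkPiAlgebra K (Fin n) K).compLinearMap fun i => LinearMap.proj (f i)

@[simp] lemma tMul_apply (v : Fin n → (Fin d → K)) (f : Fin n → Fin d) :
    tMul K n d v f = ∏ i, v i (f i) := by
  simp [tMul]

noncomputable def toFunc (K : Type*) [Field K] (n d : ℕ) :
    (⨂[K] _ : Fin n, (Fin d → K)) →ₗ[K] ((Fin n → Fin d) → K) :=
  PiTensorProduct.lift (tMul K n d)

noncomputable def bten (K : Type*) [Field K] {n d : ℕ} (g : Fin n → Fin d) :
    ⨂[K] _ : Fin n, (Fin d → K) :=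
  tprod K fun i => Pi.single (g i) (1 : K)

lemma toFunc_bten (g : Fin n → Fin d) :
    toFunc K n d (bten K g) = Pi.single g 1 := by
  funext f
  rw [toFunc, bten, PiTensorProduct.lift.tprod, tMul_apply]
  by_cases h : f = g
  · subst h
    simp
  · obtain ⟨i, hi⟩ := Function.ne_iff.mp h
    rw [Finset.prod_eq_zero (Finset.mem_univ i) (by simp [Pi.single_apply, hi]),
      Pi.single_apply, if_neg h]

noncomputable def ofFunc (K : Type*) [Field K] (n d : ℕ) :
    ((Fin n → Fin d) → K) →ₗ[K] ⨂[K] _ : Fin n, (Fin d → K) :=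
  ∑ g : Fin n → Fin d, (LinearMap.proj g).smulRight (bten K g)

lemma ofFunc_apply (ψ : (Fin n → Fin d) → K) :
    ofFunc K n d ψ = ∑ g : Fin n → Fin d, ψ g • bten K g := by
  simp [ofFunc]

lemma bten_expand (v : Fin n → (Fin d → K)) :
    PiTensorProduct.tprod K v = ∑ g : Fin n → Fin d, (∏ i, v i (g i)) • bten K g := by
  have h1 : PiTensorProduct.tprod K v = PiTensorProduct.tprod K fun i => ∑ j : Fin d, v i j • (Pi.single j (1 : K) : Fin d → K) := by
    congr 1
    funext i
    funext a
    simp [Pi.single_apply, Finset.sum_apply]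
  rw [h1, MultilinearMap.map_sum]
  refine Finset.sum_congr rfl fun g _ => ?_
  rw [bten, ← MultilinearMap.map_smul_univ]

noncomputable def tensorEquiv (K : Type*) [Field K] (n d : ℕ) :
    (⨂[K] _ : Fin n, (Fin d → K)) ≃ₗ[K] ((Fin n → Fin d) → K) :=
  LinearEquiv.ofLinear (toFunc K n d) (ofFunc K n d)
    (by
      apply (Pi.basisFun K (Fin n → Fin d)).ext
      intro g
      simp only [LinearMap.comp_apply, LinearMap.id_apply, Pi.basisFun_apply]
      rw [ofFunc_apply]
      rw [Finset.sum_eq_single g (by intro b _ hb; simp [Pi.single_apply, hb])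
        (by simp)]
      simp [toFunc_bten])
    (by
      apply PiTensorProduct.ext
      apply MultilinearMap.ext
      intro v
      simp only [LinearMap.compMultilinearMap_apply, LinearMap.comp_apply, LinearMap.id_apply]
      rw [toFunc, PiTensorProduct.lift.tprod, ofFunc_apply]
      conv_rhs => rw [bten_expand v]
      refine Finset.sum_congr rfl fun g _ => ?_
      rw [tMul_apply])

@[simp] lemma tensorEquiv_apply (z) : tensorEquiv K n d z = toFunc K n d z := rfl

lemma tensorEquiv_bten (g : Fin n → Fin d) :
    tensorEquiv K n d (bten K g) = Pi.single g 1 := toFunc_bten g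

lemma tensorEquiv_symm_single (g : Fin n → Fin d) :
    (tensorEquiv K n d).symm (Pi.single g 1) = bten K g := by
  rw [LinearEquiv.symm_apply_eq, tensorEquiv_bten]

lemma trace_pi {α : Type*} [Fintype α] [DecidableEq α] (f : (α → K) →ₗ[K] (α → K)) :
    LinearMap.trace K (α → K) f = ∑ a : α, f (Pi.single a 1) a := by
  rw [LinearMap.trace_eq_matrix_trace K (Pi.basisFun K α), Matrix.trace]
  refine Finset.sum_congr rfl fun a _ => ?_
  simp [Matrix.diag, LinearMap.toMatrix_apply]

/-- the diagonal endomorphism of `Fin d → K` -/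
noncomputable def diagL (K : Type*) [Field K] {d : ℕ} (x : Fin d → K) :
    (Fin d → K) →ₗ[K] (Fin d → K) :=
  LinearMap.pi fun j => x j • LinearMap.proj j

lemma diagL_single (x : Fin d → K) (a : Fin d) :
    diagL K x (Pi.single a 1) = x a • (Pi.single a 1 : Fin d → K) := by
  funext j
  simp [diagL, Pi.single_apply]
  by_cases h : j = a <;> simp [h]

lemma comp_bten (σ : Equiv.Perm (Fin n)) (x : Fin d → K) (g : Fin n → Fin d) :
    (permMap K (Fin d → K) n σ ∘ₗ tpowMap K (Fin d → K) n (diagL K x)) (bten K g) =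
      (∏ i, x (g i)) • bten K (fun i => g (σ.symm i)) := by
  rw [LinearMap.comp_apply, tpowMap, bten, PiTensorProduct.map_tprod]
  have h1 : (PiTensorProduct.tprod K) (fun i => diagL K x (Pi.single (g i) 1)) =
      (∏ i, x (g i)) • (PiTensorProduct.tprod K) (fun i => (Pi.single (g i) 1 : Fin d → K)) := by
    rw [← MultilinearMap.map_smul_univ]
    congr 1
    funext i
    rw [diagL_single]
  rw [h1, map_smul, permMap]
  congr 1
  rw [LinearEquiv.coe_coe, PiTensorProduct.reindex_tprod]
  rfl

lemma trace_perm_diag (σ : Equiv.Perm (Fin n)) (x : Fin d → K) :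
    LinearMap.trace K (⨂[K] _ : Fin n, (Fin d → K))
        (permMap K (Fin d → K) n σ ∘ₗ tpowMap K (Fin d → K) n (diagL K x)) =
      ∑ g : Fin n → Fin d,
        (if g = (fun i => g (σ.symm i)) then ∏ i, x (g i) else 0) := by
  set P := permMap K (Fin d → K) n σ ∘ₗ tpowMap K (Fin d → K) n (diagL K x) with hP
  rw [← LinearMap.trace_conj' P (tensorEquiv K n d), trace_pi]
  refine Finset.sum_congr rfl fun g _ => ?_
  rw [LinearEquiv.conj_apply, LinearMap.comp_apply, LinearMap.comp_apply]
  simp only [LinearEquiv.coe_coe]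
  rw [tensorEquiv_symm_single, comp_bten, map_smul, tensorEquiv_bten]
  rw [Pi.smul_apply, Pi.single_apply, smul_eq_mul]
  by_cases h : g = fun i => g (σ.symm i)
  · rw [if_pos h, if_pos h, mul_one]
  · rw [if_neg h, if_neg h, mul_zero]

open Equiv Equiv.Perm

/-- quotient of `Fin n` by the same-cycle relation of `σ` -/
abbrev QC {n : ℕ} (σ : Perm (Fin n)) : Type := Quotient (SameCycle.setoid σ)

def qmk {n : ℕ} (σ : Perm (Fin n)) (i : Fin n) : QC σ := Quotient.mk (SameCycle.setoid σ) i

lemma qmk_eq_iff {σ : Perm (Fin n)} {i j : Fin n} : qmk σ i = qmk σ j ↔ σ.SameCycle i j :=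
  Quotient.eq

instance {n : ℕ} (σ : Perm (Fin n)) : DecidableEq (QC σ) := fun a b =>
  Quotient.recOnSubsingleton₂ a b fun i j =>
    decidable_of_iff (σ.SameCycle i j) qmk_eq_iff.symm

instance {n : ℕ} (σ : Perm (Fin n)) : Fintype (QC σ) :=
  @Quotient.fintype _ _ (SameCycle.setoid σ)
    (fun i j => decidable_of_iff (σ.SameCycle i j) Iff.rfl)

def fiber {n : ℕ} (σ : Perm (Fin n)) (q : QC σ) : Finset (Fin n) :=
  Finset.univ.filter fun i => qmk σ i = q

def csize {n : ℕ} (σ : Perm (Fin n)) (q : QC σ) : ℕ := (fiber σ q).card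

lemma out_mem_fiber {σ : Perm (Fin n)} (q : QC σ) : q.out ∈ fiber σ q := by
  simp only [fiber, Finset.mem_filter, Finset.mem_univ, true_and]
  exact Quotient.out_eq q

lemma qmk_out {σ : Perm (Fin n)} (q : QC σ) : qmk σ q.out = q := Quotient.out_eq q

lemma sameCycle_out {σ : Perm (Fin n)} (i : Fin n) : σ.SameCycle (qmk σ i).out i :=
  qmk_eq_iff.mp (qmk_out (qmk σ i))

lemma one_le_csize {σ : Perm (Fin n)} (q : QC σ) : 1 ≤ csize σ q :=
  Finset.card_pos.mpr ⟨q.out, out_mem_fiber q⟩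

lemma apply_eq_of_sameCycle {σ : Perm (Fin n)} {g : Fin n → Fin d}
    (hg : ∀ i, g (σ i) = g i) {a b : Fin n} (h : σ.SameCycle a b) : g a = g b := by
  have key : ∀ z : ℤ, ∀ a : Fin n, g ((σ ^ z) a) = g a := by
    intro z
    induction z using Int.induction_on with
    | zero => simp
    | succ k ih =>
      intro a
      have : (σ ^ ((k : ℤ) + 1)) a = (σ ^ (k : ℤ)) (σ a) := by
        rw [zpow_add_one, Perm.mul_apply]
      rw [this, ih (σ a), hg a]
    | pred k ih =>
      intro a
      have : (σ ^ (-(k : ℤ) - 1)) a = (σ ^ (-(k : ℤ))) (σ⁻¹ a) := by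
        rw [zpow_sub_one, Perm.mul_apply]
      rw [this, ih (σ⁻¹ a), ← hg (σ⁻¹ a), ← Perm.mul_apply, mul_inv_cancel, Perm.one_apply]
  obtain ⟨z, hz⟩ := h
  rw [← hz, key]

lemma key_sum (σ : Perm (Fin n)) (x : Fin d → K) :
    (∑ g : Fin n → Fin d, if g = (fun i => g (σ.symm i)) then ∏ i, x (g i) else 0) =
      ∏ q : QC σ, (∑ j : Fin d, x j ^ csize σ q) := by
  classical
  have hsc : ∀ i, σ.SameCycle (σ i) i := fun i => ⟨-1, by simp⟩
  have hcond : ∀ g : Fin n → Fin d,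
      (g = fun i => g (σ.symm i)) ↔ (∀ i, g (σ i) = g i) := by
    intro g
    rw [funext_iff]
    constructor
    · intro h i
      have := h (σ i)
      rw [Equiv.symm_apply_apply] at this
      exact this
    · intro h i
      have := h (σ.symm i)
      rw [Equiv.apply_symm_apply] at this
      exact this
  have step1 : (∑ g : Fin n → Fin d, if g = (fun i => g (σ.symm i)) then ∏ i, x (g i) else 0) =
      ∑ g ∈ Finset.univ.filter (fun g : Fin n → Fin d => ∀ i, g (σ i) = g i), ∏ i, x (g i) := by
    rw [Finset.sum_filter]
    exact Finset.sum_congr rfl fun g _ => if_congr (hcond g) rfl rfl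
  have step2 : (∑ g ∈ Finset.univ.filter (fun g : Fin n → Fin d => ∀ i, g (σ i) = g i),
        ∏ i, x (g i)) = ∑ h : QC σ → Fin d, ∏ i : Fin n, x (h (qmk σ i)) := by
    refine Finset.sum_nbij' (i := fun g q => g q.out) (j := fun h i => h (qmk σ i))
      (fun g _ => Finset.mem_univ _) ?_ ?_ ?_ ?_
    · intro h _
      refine Finset.mem_filter.mpr ⟨Finset.mem_univ _, fun i => ?_⟩
      exact congrArg h (qmk_eq_iff.mpr (hsc i))
    · intro g hg
      funext i
      exact apply_eq_of_sameCycle (Finset.mem_filter.mp hg).2 (sameCycle_out i)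
    · intro h _
      funext q
      exact congrArg h (qmk_out q)
    · intro g hg
      refine Finset.prod_congr rfl fun i _ => ?_
      exact congrArg x (apply_eq_of_sameCycle (Finset.mem_filter.mp hg).2
        (sameCycle_out i)).symm
  have step3 : ∀ h : QC σ → Fin d,
      (∏ i : Fin n, x (h (qmk σ i))) = ∏ q : QC σ, x (h q) ^ csize σ q := by
    intro h
    rw [← Finset.prod_fiberwise_of_maps_to (g := qmk σ) (t := Finset.univ)
      (fun i _ => Finset.mem_univ _) (fun i => x (h (qmk σ i)))]
    refine Finset.prod_congr rfl fun q _ => ?_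
    rw [csize, fiber]
    rw [Finset.prod_congr rfl (g := fun _ => x (h q)) (fun i hi => by
      rw [(Finset.mem_filter.mp hi).2]), Finset.prod_const]
  rw [step1, step2]
  rw [Finset.sum_congr rfl fun h _ => step3 h]
  rw [Finset.prod_univ_sum]
  rw [← Fintype.piFinset_univ]

/-- multiset of orbit sizes of a permutation (including fixed points) -/
def oType {n : ℕ} (σ : Perm (Fin n)) : Multiset ℕ :=
  (Finset.univ : Finset (QC σ)).val.map (csize σ)

lemma one_le_of_mem_oType {σ : Perm (Fin n)} {k : ℕ} (hk : k ∈ oType σ) : 1 ≤ k := by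
  obtain ⟨q, _, rfl⟩ := Multiset.mem_map.mp hk
  exact one_le_csize q

lemma card_oType (σ : Perm (Fin n)) : Multiset.card (oType σ) = Fintype.card (QC σ) := by
  simp [oType]

lemma prod_oType (σ : Perm (Fin n)) (f : ℕ → K) :
    ((oType σ).map f).prod = ∏ q : QC σ, f (csize σ q) := by
  rw [oType, Multiset.map_map]
  rfl

lemma fiber_eq_support_cycleOf {σ : Perm (Fin n)} {a : Fin n} (ha : a ∈ σ.support) :
    fiber σ (qmk σ a) = (σ.cycleOf a).support := by
  ext y
  simp only [fiber, Finset.mem_filter, Finset.mem_univ, true_and,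
    Equiv.Perm.mem_support_cycleOf_iff, qmk_eq_iff]
  constructor
  · intro h
    exact ⟨h.symm, ha⟩
  · intro h
    exact h.1.symm

lemma fiber_eq_singleton {σ : Perm (Fin n)} {a : Fin n} (ha : a ∉ σ.support) :
    fiber σ (qmk σ a) = {a} := by
  have hfix : Function.IsFixedPt σ a := by
    rwa [Equiv.Perm.notMem_support] at ha
  ext y
  simp only [fiber, Finset.mem_filter, Finset.mem_univ, true_and, qmk_eq_iff,
    Finset.mem_singleton]
  constructor
  · intro h
    exact (h.symm.eq_of_left hfix).symm
  · rintro rfl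
    exact Equiv.Perm.SameCycle.refl _ _

lemma out_mem_support {σ : Perm (Fin n)} {q : QC σ} (hq : 2 ≤ csize σ q) :
    q.out ∈ σ.support := by
  by_contra h
  have h1 : fiber σ q = {q.out} := by
    conv_lhs => rw [← qmk_out q]
    exact fiber_eq_singleton h
  rw [csize, h1] at hq
  simp at hq

lemma fiber_eq_of_two_le {σ : Perm (Fin n)} {q : QC σ} (hq : 2 ≤ csize σ q) :
    fiber σ q = (σ.cycleOf q.out).support := by
  conv_lhs => rw [← qmk_out q]
  exact fiber_eq_support_cycleOf (out_mem_support hq)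

lemma oType_filter_eq_cycleType (σ : Perm (Fin n)) :
    (oType σ).filter (fun k => 2 ≤ k) = σ.cycleType := by
  classical
  rw [Equiv.Perm.cycleType_def, oType, Multiset.filter_map]
  refine Multiset.map_eq_map_of_bij_of_nodup _ _
    (Multiset.Nodup.filter _ (Finset.univ : Finset (QC σ)).nodup) (Finset.nodup _)
    (fun q _ => σ.cycleOf q.out) ?_ ?_ ?_ ?_
  · -- maps into cycleFactorsFinset
    intro q hq
    rw [Finset.mem_val, Equiv.Perm.cycleOf_mem_cycleFactorsFinset_iff]
    exact out_mem_support (Multiset.mem_filter.mp hq).2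
  · -- injective
    intro q hq q' hq' heq
    have heq' : σ.cycleOf q.out = σ.cycleOf q'.out := heq
    have h1 := fiber_eq_of_two_le (Multiset.mem_filter.mp hq).2
    have h2 := fiber_eq_of_two_le (Multiset.mem_filter.mp hq').2
    have hfib : fiber σ q = fiber σ q' := by rw [h1, h2, heq']
    have hout : q.out ∈ fiber σ q' := by
      rw [← hfib]; exact out_mem_fiber q
    have h3 : qmk σ q.out = q' := (Finset.mem_filter.mp hout).2
    calc q = qmk σ q.out := (qmk_out q).symm
    _ = q' := h3
  · -- surjective
    intro c hc
    rw [Finset.mem_val] at hc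
    have hcyc : c.IsCycle := (Equiv.Perm.mem_cycleFactorsFinset_iff.mp hc).1
    obtain ⟨a, ha⟩ : c.support.Nonempty :=
      Finset.card_pos.mp (lt_of_lt_of_le (by norm_num) hcyc.two_le_card_support)
    have hceq : c = σ.cycleOf a := Equiv.Perm.cycle_is_cycleOf ha hc
    have hasupp : a ∈ σ.support := by
      rw [← Equiv.Perm.cycleOf_mem_cycleFactorsFinset_iff, ← hceq]
      exact hc
    have hfib : fiber σ (qmk σ a) = c.support := by
      rw [fiber_eq_support_cycleOf hasupp, hceq]
    have hq2 : 2 ≤ csize σ (qmk σ a) := by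
      rw [csize, hfib]
      exact hcyc.two_le_card_support
    refine ⟨qmk σ a, Multiset.mem_filter.mpr ⟨Finset.mem_val.mpr (Finset.mem_univ _), hq2⟩, ?_⟩
    have hsc2 : σ.SameCycle (qmk σ a).out a := sameCycle_out a
    rw [hceq]
    exact hsc2.cycleOf_eq
  · -- sizes agree
    intro q hq
    have h1 := fiber_eq_of_two_le (Multiset.mem_filter.mp hq).2
    rw [Function.comp_apply, csize, h1]

open Polynomial in
lemma multiset_eq_of_eval {K : Type*} [Field K] [CharZero K] (d : ℕ) (s t : Multiset ℕ)
    (hsd : Multiset.card s ≤ d) (hcard : Multiset.card s = Multiset.card t)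
    (h : ∀ m : ℕ, m + 1 ≤ d →
      (s.map fun k => (2 : K) ^ k + (m : K)).prod = (t.map fun k => (2 : K) ^ k + (m : K)).prod) :
    s = t := by
  classical
  set f2 : ℕ → K := fun k => -((2 : K) ^ k) with hf2
  have hmon : ∀ u : Multiset ℕ, ∀ p ∈ (u.map f2).map fun a => X - C a, Monic p := by
    intro u p hp
    obtain ⟨a, _, rfl⟩ := Multiset.mem_map.mp hp
    exact monic_X_sub_C a
  have hmon2 : ∀ u : Multiset ℕ, (((u.map f2).map fun a => X - C a).prod : K[X]).Monic :=
    fun u => monic_multiset_prod_of_monic _ _ fun a _ => monic_X_sub_C a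
  have hdeg : ∀ u : Multiset ℕ,
      (((u.map f2).map fun a => X - C a).prod : K[X]).natDegree = Multiset.card u := by
    intro u
    rw [natDegree_multiset_prod_of_monic _ (hmon u), Multiset.map_map, Multiset.map_map]
    rw [Multiset.map_congr rfl (fun a _ => by
      show ((X - C (f2 a) : K[X])).natDegree = 1
      exact natDegree_X_sub_C _)]
    simp
  have heval : ∀ u : Multiset ℕ, ∀ m : ℕ,
      (((u.map f2).map fun a => X - C a).prod : K[X]).eval (m : K) =
        (u.map fun k => (2 : K) ^ k + (m : K)).prod := by
    intro u m
    rw [eval_multiset_prod, Multiset.map_map, Multiset.map_map]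
    refine congrArg Multiset.prod (Multiset.map_congr rfl fun a _ => ?_)
    show ((X - C (f2 a) : K[X])).eval (m : K) = (2 : K) ^ a + (m : K)
    rw [eval_sub, eval_X, eval_C, hf2]
    ring
  set Ps : K[X] := ((s.map f2).map fun a => X - C a).prod with hPs
  set Pt : K[X] := ((t.map f2).map fun a => X - C a).prod with hPt
  have hPseq : Ps = Pt := by
    by_contra hne
    have hD : Ps - Pt ≠ 0 := sub_ne_zero.mpr hne
    have hdo : (Ps - Pt).natDegree < Multiset.card s := by
      have hle : (Ps - Pt).natDegree ≤ Multiset.card s := by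
        refine le_trans (natDegree_sub_le _ _) ?_
        rw [hdeg s, hdeg t, ← hcard]
        simp
      rcases lt_or_eq_of_le hle with h' | h'
      · exact h'
      · exfalso
        apply hD
        rw [← leadingCoeff_eq_zero, leadingCoeff, h', coeff_sub]
        have c1 : Ps.coeff (Multiset.card s) = 1 := by
          have := (hmon2 s).coeff_natDegree
          rwa [hdeg s] at this
        have c2 : Pt.coeff (Multiset.card s) = 1 := by
          have := (hmon2 t).coeff_natDegree
          rwa [hdeg t, ← hcard] at this
        rw [c1, c2, sub_self]
    have hd_le : d ≤ (Ps - Pt).natDegree := by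
      have hsub : (Finset.range d).image (fun m : ℕ => (m : K)) ⊆ (Ps - Pt).roots.toFinset := by
        intro a ha
        obtain ⟨m, hm, rfl⟩ := Finset.mem_image.mp ha
        rw [Multiset.mem_toFinset, mem_roots hD]
        rw [IsRoot, eval_sub, heval s, heval t, h m (Finset.mem_range.mp hm), sub_self]
      calc d = ((Finset.range d).image fun m : ℕ => (m : K)).card := by
              rw [Finset.card_image_of_injective _ Nat.cast_injective, Finset.card_range]
        _ ≤ (Ps - Pt).roots.toFinset.card := Finset.card_le_card hsub
        _ ≤ Multiset.card (Ps - Pt).roots := Multiset.toFinset_card_le _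
        _ ≤ (Ps - Pt).natDegree := card_roots' _
    omega
  have h1 : s.map f2 = t.map f2 := by
    have := congrArg Polynomial.roots hPseq
    rwa [hPs, hPt, roots_multiset_prod_X_sub_C, roots_multiset_prod_X_sub_C] at this
  refine Multiset.map_injective ?_ h1
  intro a b hab
  simp only [hf2, neg_inj] at hab
  have h2 : ((2 ^ a : ℕ) : K) = ((2 ^ b : ℕ) : K) := by push_cast; exact hab
  exact Nat.pow_right_injective le_rfl (Nat.cast_injective h2)

/-- special evaluation vector -/
noncomputable def xvec (K : Type*) [Field K] {d : ℕ} (t : K) (m : ℕ) : Fin d → K :=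
  fun j => if (j : ℕ) = 0 then t else if (j : ℕ) ≤ m then 1 else 0

lemma sum_pow_xvec {K : Type*} [Field K] {d m : ℕ} (hm : m + 1 ≤ d) (t : K) {k : ℕ}
    (hk : 1 ≤ k) :
    ∑ j : Fin d, (xvec K t m j) ^ k = t ^ k + (m : K) := by
  have hk0 : k ≠ 0 := by omega
  let F : ℕ → K := fun j => if j = 0 then t ^ k else if j ≤ m then 1 else 0
  have hFv : ∀ j : ℕ, F j = if j = 0 then t ^ k else if j ≤ m then 1 else 0 := fun _ => rfl
  have h1 : ∀ j : Fin d, (xvec K t m j) ^ k = F (j : ℕ) := by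
    intro j
    rw [xvec, hFv]
    simp only [apply_ite (fun y : K => y ^ k), one_pow, zero_pow hk0]
  rw [Finset.sum_congr rfl fun j _ => h1 j]
  rw [Fin.sum_univ_eq_sum_range F d]
  rw [← Finset.sum_subset (Finset.range_subset_range.mpr hm) (fun j _ hj => by
    rw [Finset.mem_range, not_lt] at hj
    rw [hFv, if_neg (by omega), if_neg (by omega)])]
  rw [Finset.sum_range_succ' F m]
  have h2 : ∀ i ∈ Finset.range m, F (i + 1) = 1 := by
    intro i hi
    rw [hFv, if_neg (by omega), if_pos (by rw [Finset.mem_range] at hi; omega)]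
  rw [Finset.sum_congr rfl h2, Finset.sum_const, Finset.card_range, hFv, if_pos rfl]
  simp [add_comm]

end Stmt8Aux

open Stmt8Aux

/-- for `n ≤ d` and `σ, τ ∈ S_n`, the trace functions
`A ↦ Tr(L_σ^{(n)} ∘ A^{⊗n})` and `A ↦ Tr(L_τ^{(n)} ∘ A^{⊗n})` on `End_K(K^d)` coincide
if and only if `σ` and `τ` are conjugate in `S_n`. -/
theorem stmt8 (K : Type*) [Field K] [Infinite K] [CharZero K] (n d : ℕ) (hnd : n ≤ d)
    (σ τ : Equiv.Perm (Fin n)) :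
    (∀ A : (Fin d → K) →ₗ[K] (Fin d → K),
        LinearMap.trace K (⨂[K] _ : Fin n, (Fin d → K))
            (permMap K (Fin d → K) n σ ∘ₗ tpowMap K (Fin d → K) n A) =
          LinearMap.trace K (⨂[K] _ : Fin n, (Fin d → K))
            (permMap K (Fin d → K) n τ ∘ₗ tpowMap K (Fin d → K) n A)) ↔
      IsConj σ τ := by
  classical
  constructor
  · intro hA
    by_cases hn1 : n ≤ 1
    · have hss : Subsingleton (Fin n) := by
        rcases Nat.le_one_iff_eq_zero_or_eq_one.mp hn1 with h0 | h1
        · subst h0; infer_instance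
        · subst h1; infer_instance
      have hst : σ = τ := Equiv.ext fun i => Subsingleton.elim _ _
      rw [hst]
    · push_neg at hn1
      have hd2 : 2 ≤ d := le_trans hn1 hnd
      have hdiag : ∀ x : Fin d → K,
          (∏ q : QC σ, (∑ j, x j ^ csize σ q)) = ∏ q : QC τ, (∑ j, x j ^ csize τ q) := by
        intro x
        have h0 := hA (diagL K x)
        rwa [trace_perm_diag, trace_perm_diag, key_sum, key_sum] at h0
      have hprod : ∀ x : Fin d → K,
          ((oType σ).map fun k => ∑ j, x j ^ k).prod
            = ((oType τ).map fun k => ∑ j, x j ^ k).prod := by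
        intro x
        rw [prod_oType, prod_oType]
        exact hdiag x
      have hcard : Multiset.card (oType σ) = Multiset.card (oType τ) := by
        have h1 := hdiag (fun _ => 1)
        have e : ∀ ρ : Equiv.Perm (Fin n),
            (∏ q : QC ρ, (∑ j : Fin d, (1 : K) ^ csize ρ q))
              = (d : K) ^ Fintype.card (QC ρ) := by
          intro ρ
          rw [Finset.prod_congr rfl (fun q _ => by
            rw [Finset.sum_congr rfl fun j _ => one_pow _, Finset.sum_const, Finset.card_univ,
              Fintype.card_fin, nsmul_eq_mul, mul_one]),
            Finset.prod_const, Finset.card_univ]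
        rw [e σ, e τ] at h1
        rw [card_oType, card_oType]
        have h2 : ((d ^ Fintype.card (QC σ) : ℕ) : K) = ((d ^ Fintype.card (QC τ) : ℕ) : K) := by
          push_cast
          exact h1
        exact Nat.pow_right_injective hd2 (Nat.cast_injective h2)
      have hsd : Multiset.card (oType σ) ≤ d := by
        rw [card_oType]
        refine le_trans (Fintype.card_le_of_surjective _ fun q => ⟨q.out, qmk_out q⟩) ?_
        rw [Fintype.card_fin]
        exact hnd
      have heval : ∀ m : ℕ, m + 1 ≤ d →
          ((oType σ).map fun k => (2 : K) ^ k + (m : K)).prod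
            = ((oType τ).map fun k => (2 : K) ^ k + (m : K)).prod := by
        intro m hm
        have h3 := hprod (xvec K 2 m)
        rwa [Multiset.map_congr rfl fun k hk => sum_pow_xvec hm 2 (one_le_of_mem_oType hk),
          Multiset.map_congr rfl fun k hk => sum_pow_xvec hm 2 (one_le_of_mem_oType hk)] at h3
      have hoeq : oType σ = oType τ := multiset_eq_of_eval d _ _ hsd hcard heval
      refine Equiv.Perm.isConj_iff_cycleType_eq.mpr ?_
      rw [← oType_filter_eq_cycleType σ, ← oType_filter_eq_cycleType τ, hoeq]
  · intro hconj A
    obtain ⟨c, hc⟩ := isConj_iff.mp hconj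
    have hmul : ∀ π ρ : Equiv.Perm (Fin n),
        permMap K (Fin d → K) n (π * ρ) = permMap K (Fin d → K) n π ∘ₗ permMap K (Fin d → K) n ρ := by
      intro π ρ
      rw [permMap, permMap, permMap, Equiv.Perm.mul_def,
        ← PiTensorProduct.reindex_trans (ρ : Fin n ≃ Fin n) (π : Fin n ≃ Fin n)]
      rfl
    have hone : permMap K (Fin d → K) n 1 = LinearMap.id := by
      rw [permMap, Equiv.Perm.one_def, PiTensorProduct.reindex_refl]
      rfl
    have hcomm : tpowMap K (Fin d → K) n A ∘ₗ permMap K (Fin d → K) n c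
        = permMap K (Fin d → K) n c ∘ₗ tpowMap K (Fin d → K) n A := by
      exact PiTensorProduct.map_comp_reindex_eq (fun _ => A) (c : Fin n ≃ Fin n)
    set Lc := permMap K (Fin d → K) n c
    set Lc' := permMap K (Fin d → K) n c⁻¹
    set Ls := permMap K (Fin d → K) n σ
    set T := tpowMap K (Fin d → K) n A
    have hinv : Lc' ∘ₗ Lc = LinearMap.id := by
      rw [← hmul, inv_mul_cancel, hone]
    rw [← hc, hmul (c * σ) c⁻¹, hmul c σ]
    have e1 : ((Lc ∘ₗ Ls) ∘ₗ Lc') ∘ₗ T = Lc * (Ls * (Lc' * T)) := by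
      simp only [Module.End.mul_eq_comp, LinearMap.comp_assoc]
    rw [e1, LinearMap.trace_mul_comm]
    have e2 : Ls * (Lc' * T) * Lc = Ls ∘ₗ (Lc' ∘ₗ (T ∘ₗ Lc)) := by
      simp only [Module.End.mul_eq_comp, LinearMap.comp_assoc]
    rw [e2, hcomm]
    have e3 : Lc' ∘ₗ Lc ∘ₗ T = T := by
      rw [← LinearMap.comp_assoc T Lc Lc', hinv, LinearMap.id_comp]
    rw [e3]
end

section
/- Let K be a field, V a finite-dimensional K-vector space, T a K-linear endomorphism of V, and let σ ∈ S_n and τ ∈ S_m. Let Π(σ,τ) ∈ S_{n+m} be the permutation that acts as σ on the first n letters and as the shift of τ on the last m letters. Then Tr(L_{Π(σ,τ)}^{(n+m)} ∘ T^{⊗(n+m)}) = Tr(L_σ^{(n)} ∘ T^{⊗n}) · Tr(L_τ^{(m)} ∘ T^{⊗m}). -/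
open scoped TensorProduct

section Aux

variable (K : Type*) [Field K] (V : Type*) [AddCommGroup V] [Module K V]

lemma tpow_finite [FiniteDimensional K V] (n : ℕ) :
    Module.Finite K (⨂[K] _ : Fin n, V) := by
  induction n with
  | zero =>
      exact Module.Finite.equiv
        (PiTensorProduct.isEmptyEquiv (Fin 0) (R := K) (s := fun _ => V)).symm
  | succ n ih =>
      have e1 : ((⨂[K] _ : Fin n, V) ⊗[K] (⨂[K] _ : Fin 1, V)) ≃ₗ[K]
          ⨂[K] _ : Fin n ⊕ Fin 1, V := PiTensorProduct.tmulEquiv K V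
      have e2 := PiTensorProduct.reindex K (fun _ : Fin n ⊕ Fin 1 => V)
        (finSumFinEquiv : Fin n ⊕ Fin 1 ≃ Fin (n + 1))
      have hf : Module.Finite K (⨂[K] _ : Fin 1, V) :=
        Module.Finite.equiv (PiTensorProduct.subsingletonEquiv (0 : Fin 1)
          (R := K) (s := fun _ => V)).symm
      have := ih
      have : Module.Finite K ((⨂[K] _ : Fin n, V) ⊗[K] (⨂[K] _ : Fin 1, V)) :=
        Module.Finite.tensorProduct K _ _
      exact Module.Finite.equiv (e1.trans e2)

end Aux

/-- for the block embedding `Π : S_n × S_m → S_{n+m}` (acting as `σ` on the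
first `n` letters and as the shift of `τ` on the last `m` letters),
`Tr(L_{Π(σ,τ)}^{(n+m)} ∘ T^{⊗(n+m)}) = Tr(L_σ^{(n)} ∘ T^{⊗n}) · Tr(L_τ^{(m)} ∘ T^{⊗m})`. -/
theorem stmt9 (K : Type*) [Field K] (V : Type*) [AddCommGroup V] [Module K V]
    [FiniteDimensional K V] (T : V →ₗ[K] V) (n m : ℕ)
    (σ : Equiv.Perm (Fin n)) (τ : Equiv.Perm (Fin m)) :
    LinearMap.trace K (⨂[K] _ : Fin (n + m), V)
        (permMap K V (n + m) ((Equiv.permCongr finSumFinEquiv) (Equiv.sumCongr σ τ)) ∘ₗ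
          tpowMap K V (n + m) T) =
      LinearMap.trace K (⨂[K] _ : Fin n, V) (permMap K V n σ ∘ₗ tpowMap K V n T) *
        LinearMap.trace K (⨂[K] _ : Fin m, V) (permMap K V m τ ∘ₗ tpowMap K V m T) := by
  have hfn := tpow_finite K V n
  have hfm := tpow_finite K V m
  -- the equivalence between the sum-indexed tensor product and `⨂ Fin (n+m)`
  set e : (⨂[K] _ : Fin n ⊕ Fin m, V) ≃ₗ[K] ⨂[K] _ : Fin (n + m), V :=
    PiTensorProduct.reindex K (fun _ : Fin n ⊕ Fin m => V) finSumFinEquiv with he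
  -- the corresponding endomorphism on the sum-indexed tensor product
  set G : (⨂[K] _ : Fin n ⊕ Fin m, V) →ₗ[K] ⨂[K] _ : Fin n ⊕ Fin m, V :=
    (PiTensorProduct.reindex K (fun _ : Fin n ⊕ Fin m => V)
        (Equiv.sumCongr σ τ)).toLinearMap ∘ₗ PiTensorProduct.map (fun _ => T) with hG
  have key1 : permMap K V (n + m) ((Equiv.permCongr finSumFinEquiv) (Equiv.sumCongr σ τ)) ∘ₗ
      tpowMap K V (n + m) T = e.conj G := by
    apply PiTensorProduct.ext
    apply MultilinearMap.ext
    intro f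
    simp only [LinearMap.compMultilinearMap_apply, LinearMap.comp_apply, permMap, tpowMap,
      LinearEquiv.conj_apply, hG, he, LinearEquiv.coe_coe, PiTensorProduct.map_tprod,
      PiTensorProduct.reindex_tprod, LinearEquiv.trans_apply, LinearEquiv.symm_symm,
      PiTensorProduct.reindex_symm]
    congr 1
  have key2 : G = (PiTensorProduct.tmulEquiv K V).conj
      (TensorProduct.map (permMap K V n σ ∘ₗ tpowMap K V n T)
        (permMap K V m τ ∘ₗ tpowMap K V m T)) := by
    apply LinearMap.ext
    intro x
    have : ∀ y, G ((PiTensorProduct.tmulEquiv K V) y) =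
        (PiTensorProduct.tmulEquiv K V)
          ((TensorProduct.map (permMap K V n σ ∘ₗ tpowMap K V n T)
            (permMap K V m τ ∘ₗ tpowMap K V m T)) y) := by
      intro y
      have hy : (G ∘ₗ (PiTensorProduct.tmulEquiv K V).toLinearMap) y =
          ((PiTensorProduct.tmulEquiv K V).toLinearMap ∘ₗ
            TensorProduct.map (permMap K V n σ ∘ₗ tpowMap K V n T)
              (permMap K V m τ ∘ₗ tpowMap K V m T)) y := by
        refine LinearMap.congr_fun ?_ y
        apply TensorProduct.ext
        apply PiTensorProduct.ext
        apply MultilinearMap.ext; intro a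
        apply LinearMap.ext; intro w
        refine w.induction_on ?_ ?_
        · intro r b
          simp only [LinearMap.compMultilinearMap_apply, LinearMap.compr₂_apply, LinearMap.compr₂ₛₗ_apply,
            TensorProduct.mk_apply, LinearMap.comp_apply, LinearEquiv.coe_coe,
            TensorProduct.tmul_smul, map_smul, PiTensorProduct.tmulEquiv_apply,
            PiTensorProduct.map_tprod, PiTensorProduct.reindex_tprod,
            TensorProduct.map_tmul]
          congr 1
          simp only [hG, permMap, tpowMap, LinearMap.comp_apply, LinearEquiv.coe_coe,
            PiTensorProduct.map_tprod, PiTensorProduct.reindex_tprod,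
            PiTensorProduct.tmulEquiv_apply]
          congr 1
          funext i
          cases i <;> rfl
        · intro u v hu hv
          simp only [map_add, hu, hv]
      simpa using hy
    have hx := this ((PiTensorProduct.tmulEquiv K V).symm x)
    simp only [LinearEquiv.conj_apply, LinearMap.comp_apply, LinearEquiv.coe_coe]
    rw [← hx, LinearEquiv.apply_symm_apply]
  rw [key1, LinearMap.trace_conj', key2, LinearMap.trace_conj',
    LinearMap.trace_tensorProduct']
end

section
/- Let K be a field, V a finite-dimensional K-vector space, and P₁, P₂ K-linear endomorphisms of V with P₁ + P₂ = id_V, P₁ ∘ P₂ = 0, P₂ ∘ P₁ = 0, P₁² = P₁ and P₂² = P₂ (complementary projections). Let T be a K-linear endomorphism of V commuting with P₁. Let n ≥ 1, let σ ∈ S_n be an n-cycle (i.e. σ acts transitively on {1,…,n}), and let f : {1,…,n} → {1,2} be a non-constant function. Then Tr(L_σ^{(n)} ∘ T^{⊗n} ∘ (P_{f(1)} ⊗ P_{f(2)} ⊗ ⋯ ⊗ P_{f(n)})) = 0. -/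
open scoped TensorProduct

/-- If one component map is zero, the induced map on the tensor power is zero. -/
lemma map_eq_zero_of_coord {K : Type*} [Field K] {V : Type*} [AddCommGroup V] [Module K V]
    {n : ℕ} (S : Fin n → (V →ₗ[K] V)) (j : Fin n) (hj : S j = 0) :
    (PiTensorProduct.map S : (⨂[K] _ : Fin n, V) →ₗ[K] ⨂[K] _ : Fin n, V) = 0 := by
  ext v
  simp only [LinearMap.compMultilinearMap_apply, PiTensorProduct.map_tprod,
    LinearMap.zero_apply]
  have h0 : (fun i => S i (v i)) j = 0 := by show S j (v j) = 0; rw [hj]; rfl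
  exact (PiTensorProduct.tprod K).map_coord_zero j h0

/-- for complementary projections `P 0, P 1` of `V`, an endomorphism `T`
commuting with `P 0`, an `n`-cycle `σ` (i.e. `σ` acts transitively on `{1,…,n}`, `n ≥ 1`)
and a non-constant function `f : {1,…,n} → {0,1}`, the trace of
`L_σ^{(n)} ∘ T^{⊗n} ∘ (P (f 1) ⊗ ⋯ ⊗ P (f n))` vanishes. -/
theorem stmt10 (K : Type*) [Field K] (V : Type*) [AddCommGroup V] [Module K V]
    [FiniteDimensional K V] (P : Fin 2 → (V →ₗ[K] V))
    (hsum : P 0 + P 1 = LinearMap.id)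
    (h01 : P 0 ∘ₗ P 1 = 0) (h10 : P 1 ∘ₗ P 0 = 0)
    (hP0 : P 0 ∘ₗ P 0 = P 0) (hP1 : P 1 ∘ₗ P 1 = P 1)
    (T : V →ₗ[K] V) (hT : T ∘ₗ P 0 = P 0 ∘ₗ T)
    (n : ℕ) (hn : 1 ≤ n) (σ : Equiv.Perm (Fin n))
    (hσ : ∀ i j : Fin n, ∃ k : ℕ, (σ ^ k) i = j)
    (f : Fin n → Fin 2) (hf : ∃ i j : Fin n, f i ≠ f j) :
    LinearMap.trace K (⨂[K] _ : Fin n, V)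
      (permMap K V n σ ∘ₗ tpowMap K V n T ∘ₗ PiTensorProduct.map fun i => P (f i)) = 0 := by
  -- T commutes with both projections
  have hTc : ∀ c : Fin 2, T ∘ₗ P c = P c ∘ₗ T := by
    intro c
    fin_cases c
    · exact hT
    · show T ∘ₗ P 1 = P 1 ∘ₗ T
      have h1 : P 1 = LinearMap.id - P 0 := by rw [← hsum]; abel
      rw [h1, LinearMap.comp_sub, LinearMap.sub_comp, LinearMap.comp_id, LinearMap.id_comp, hT]
  -- each P c is idempotent
  have hPP : ∀ c : Fin 2, P c ∘ₗ P c = P c := by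
    intro c; fin_cases c
    · exact hP0
    · exact hP1
  -- orthogonality
  have horth' : ∀ a b : Fin 2, a ≠ b → P a ∘ₗ P b = 0 := by
    intro a b hab
    fin_cases a <;> fin_cases b <;>
      first | exact absurd rfl hab | exact h01 | exact h10
  -- find a point where f changes along σ
  obtain ⟨j, hj⟩ : ∃ j, f (σ j) ≠ f j := by
    by_contra h
    push_neg at h
    have hk : ∀ (k : ℕ) (i : Fin n), f ((σ ^ k) i) = f i := by
      intro k
      induction k with
      | zero => intro i; simp
      | succ k ih =>
        intro i
        rw [pow_succ, Equiv.Perm.mul_apply, ih, h]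
    obtain ⟨i, j', hij⟩ := hf
    obtain ⟨k, hk'⟩ := hσ i j'
    exact hij (by rw [← hk', hk])
  set Q : (⨂[K] _ : Fin n, V) →ₗ[K] ⨂[K] _ : Fin n, V :=
    PiTensorProduct.map fun i => P (f i) with hQdef
  set Q' : (⨂[K] _ : Fin n, V) →ₗ[K] ⨂[K] _ : Fin n, V :=
    PiTensorProduct.map fun i => P (f (σ i)) with hQ'def
  set L := permMap K V n σ with hLdef
  set Tn := tpowMap K V n T with hTndef
  have hQidem : Q ∘ₗ Q = Q := by
    rw [hQdef, ← PiTensorProduct.map_comp]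
    congr 1
    funext i
    exact hPP (f i)
  have hQperm : Q ∘ₗ L = L ∘ₗ Q' := by
    have h := PiTensorProduct.map_comp_reindex_eq (fun i => P (f (σ i))) σ
    rw [hQdef, hQ'def, hLdef, permMap]
    simpa using h
  have hTQ : Tn ∘ₗ Q' = Q' ∘ₗ Tn := by
    rw [hTndef, hQ'def, tpowMap, ← PiTensorProduct.map_comp, ← PiTensorProduct.map_comp]
    congr 1
    funext i
    exact hTc (f (σ i))
  have hzero : Q' ∘ₗ Q = 0 := by
    rw [hQ'def, hQdef, ← PiTensorProduct.map_comp]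
    exact map_eq_zero_of_coord _ j (horth' _ _ hj)
  have h1 : Q ∘ₗ (L ∘ₗ Tn ∘ₗ Q) = 0 := by
    calc Q ∘ₗ (L ∘ₗ Tn ∘ₗ Q) = (Q ∘ₗ L) ∘ₗ (Tn ∘ₗ Q) := by
          rw [LinearMap.comp_assoc]
      _ = (L ∘ₗ Q') ∘ₗ (Tn ∘ₗ Q) := by rw [hQperm]
      _ = L ∘ₗ ((Q' ∘ₗ Tn) ∘ₗ Q) := by rw [LinearMap.comp_assoc, LinearMap.comp_assoc]
      _ = L ∘ₗ ((Tn ∘ₗ Q') ∘ₗ Q) := by rw [hTQ]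
      _ = L ∘ₗ (Tn ∘ₗ (Q' ∘ₗ Q)) := by rw [LinearMap.comp_assoc]
      _ = 0 := by rw [hzero, LinearMap.comp_zero, LinearMap.comp_zero]
  have h2 : L ∘ₗ Tn ∘ₗ Q = (L ∘ₗ Tn ∘ₗ Q) * Q := by
    show _ = (L ∘ₗ Tn ∘ₗ Q) ∘ₗ Q
    rw [LinearMap.comp_assoc, LinearMap.comp_assoc, hQidem]
  rw [h2, LinearMap.trace_mul_comm]
  show LinearMap.trace K _ (Q ∘ₗ (L ∘ₗ Tn ∘ₗ Q)) = 0
  rw [h1, map_zero]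
end

section
/- Let K be a field, V a finite-dimensional K-vector space, and P₁, P₂ complementary projections of V (P₁ + P₂ = id_V, P₁ ∘ P₂ = P₂ ∘ P₁ = 0, P₁² = P₁, P₂² = P₂). Let T be a K-linear endomorphism of V commuting with P₁, let n ≥ 1, and let σ ∈ S_n be an n-cycle. Then Tr(L_σ^{(n)} ∘ T^{⊗n}) = Tr(L_σ^{(n)} ∘ (T∘P₁)^{⊗n}) + Tr(L_σ^{(n)} ∘ (T∘P₂)^{⊗n}). -/
open scoped TensorProduct

section Aux

variable (K : Type*) [Field K] (V : Type*) [AddCommGroup V] [Module K V]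
  (n : ℕ) (σ : Equiv.Perm (Fin n))

/-- Tensor product of a family of endomorphisms. -/
noncomputable def famMap (A : Fin n → (V →ₗ[K] V)) :
    (⨂[K] _ : Fin n, V) →ₗ[K] ⨂[K] _ : Fin n, V :=
  PiTensorProduct.map A

/-- Iterated compositions along the orbit of `σ`. -/
noncomputable def Dfam (A : Fin n → (V →ₗ[K] V)) : ℕ → Fin n → (V →ₗ[K] V)
  | 0 => fun _ => LinearMap.id
  | (k+1) => fun i => Dfam A k (σ i) ∘ₗ A i

lemma famMap_comp (A B : Fin n → (V →ₗ[K] V)) :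
    famMap K V n (fun i => A i ∘ₗ B i) = famMap K V n A ∘ₗ famMap K V n B :=
  PiTensorProduct.map_comp A B

lemma map_comp_permMap (A : Fin n → (V →ₗ[K] V)) :
    famMap K V n A ∘ₗ permMap K V n σ =
      permMap K V n σ ∘ₗ famMap K V n (fun i => A (σ i)) := by
  ext v
  simp [permMap, famMap, PiTensorProduct.reindex_tprod, PiTensorProduct.map_tprod]

lemma pow_permMap_map (A : Fin n → (V →ₗ[K] V)) (k : ℕ) :
    (permMap K V n σ ∘ₗ famMap K V n A) ^ k =
      ((permMap K V n σ) ^ k) ∘ₗ famMap K V n (Dfam K V n σ A k) := by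
  induction k with
  | zero =>
      have : famMap K V n (Dfam K V n σ A 0) = LinearMap.id := by
        simpa [famMap, Dfam] using PiTensorProduct.map_id (R := K) (s := fun _ : Fin n => V)
      simp [this]
  | succ k ih =>
      rw [pow_succ, ih, pow_succ]
      have h1 : ∀ (f g : (⨂[K] _ : Fin n, V) →ₗ[K] ⨂[K] _ : Fin n, V), f * g = f ∘ₗ g :=
        fun _ _ => rfl
      rw [h1, h1]
      calc (((permMap K V n σ) ^ k) ∘ₗ famMap K V n (Dfam K V n σ A k)) ∘ₗ
            (permMap K V n σ ∘ₗ famMap K V n A)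
          = ((permMap K V n σ) ^ k) ∘ₗ (famMap K V n (Dfam K V n σ A k) ∘ₗ
              permMap K V n σ) ∘ₗ famMap K V n A := by
            simp only [LinearMap.comp_assoc]
        _ = ((permMap K V n σ) ^ k) ∘ₗ (permMap K V n σ ∘ₗ
              famMap K V n (fun i => Dfam K V n σ A k (σ i))) ∘ₗ famMap K V n A := by
            rw [map_comp_permMap]
        _ = (((permMap K V n σ) ^ k) ∘ₗ permMap K V n σ) ∘ₗ
              (famMap K V n (fun i => Dfam K V n σ A k (σ i)) ∘ₗ famMap K V n A) := by
            simp only [LinearMap.comp_assoc]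
        _ = (((permMap K V n σ) ^ k) ∘ₗ permMap K V n σ) ∘ₗ
              famMap K V n (Dfam K V n σ A (k+1)) := by
            rw [← famMap_comp]; rfl

lemma Dfam_succ_eq (A : Fin n → (V →ₗ[K] V)) (k : ℕ) (i : Fin n) :
    Dfam K V n σ A (k+1) i = A ((σ ^ k) i) ∘ₗ Dfam K V n σ A k i := by
  induction k generalizing i with
  | zero => simp [Dfam]
  | succ k ih =>
      show Dfam K V n σ A (k+1) (σ i) ∘ₗ A i = _
      rw [ih (σ i)]
      have h2 : (σ ^ k) (σ i) = (σ ^ (k+1)) i := by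
        rw [pow_succ, Equiv.Perm.mul_apply]
      rw [h2, LinearMap.comp_assoc]
      rfl

end Aux


lemma piTensor_finite (K : Type*) [Field K] (V : Type*) [AddCommGroup V] [Module K V]
    [FiniteDimensional K V] : ∀ m : ℕ, Module.Finite K (⨂[K] _ : Fin m, V)
  | 0 => Module.Finite.equiv (PiTensorProduct.isEmptyEquiv (Fin 0)
      (R := K) (s := fun _ : Fin 0 => V)).symm
  | (m+1) => by
      haveI := piTensor_finite K V m
      let e1 : ((⨂[K] _ : Fin m, V) ⊗[K] (⨂[K] _ : Fin 1, V)) ≃ₗ[K]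
          ⨂[K] _ : Fin m ⊕ Fin 1, V := PiTensorProduct.tmulEquiv K V
      let e2 : (⨂[K] _ : Fin m ⊕ Fin 1, V) ≃ₗ[K] ⨂[K] _ : Fin (m+1), V :=
        PiTensorProduct.reindex K (fun _ : Fin m ⊕ Fin 1 => V) finSumFinEquiv
      haveI : Module.Finite K (⨂[K] _ : Fin 1, V) :=
        Module.Finite.equiv (PiTensorProduct.subsingletonEquiv (0 : Fin 1)
          (R := K) (s := fun _ : Fin 1 => V)).symm
      exact Module.Finite.equiv (e1.trans e2)

/-- for complementary projections `P 0, P 1` of `V`, an endomorphism `T`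
commuting with `P 0` and an `n`-cycle `σ` (`n ≥ 1`),
`Tr(L_σ^{(n)} ∘ T^{⊗n}) = Tr(L_σ^{(n)} ∘ (T∘P 0)^{⊗n}) + Tr(L_σ^{(n)} ∘ (T∘P 1)^{⊗n})`. -/
theorem stmt11 (K : Type*) [Field K] (V : Type*) [AddCommGroup V] [Module K V]
    [FiniteDimensional K V] (P : Fin 2 → (V →ₗ[K] V))
    (hsum : P 0 + P 1 = LinearMap.id)
    (h01 : P 0 ∘ₗ P 1 = 0) (h10 : P 1 ∘ₗ P 0 = 0)
    (hP0 : P 0 ∘ₗ P 0 = P 0) (hP1 : P 1 ∘ₗ P 1 = P 1)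
    (T : V →ₗ[K] V) (hT : T ∘ₗ P 0 = P 0 ∘ₗ T)
    (n : ℕ) (hn : 1 ≤ n) (σ : Equiv.Perm (Fin n))
    (hσ : ∀ i j : Fin n, ∃ k : ℕ, (σ ^ k) i = j) :
    LinearMap.trace K (⨂[K] _ : Fin n, V) (permMap K V n σ ∘ₗ tpowMap K V n T) =
      LinearMap.trace K (⨂[K] _ : Fin n, V) (permMap K V n σ ∘ₗ tpowMap K V n (T ∘ₗ P 0)) +
        LinearMap.trace K (⨂[K] _ : Fin n, V) (permMap K V n σ ∘ₗ tpowMap K V n (T ∘ₗ P 1)) := by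
  have i₀ : Fin n := ⟨0, hn⟩
  -- T commutes with both projections
  have hT1 : T ∘ₗ P 1 = P 1 ∘ₗ T := by
    have h1 : P 1 = LinearMap.id - P 0 := by
      rw [← hsum]; abel
    rw [h1, LinearMap.sub_comp, LinearMap.comp_sub, LinearMap.id_comp, LinearMap.comp_id, hT]
  have hTc : ∀ c : Fin 2, T ∘ₗ P c = P c ∘ₗ T := by
    intro c; fin_cases c <;> assumption
  -- zero products
  have hzero : ∀ a b : Fin 2, a ≠ b → (T ∘ₗ P a) ∘ₗ (T ∘ₗ P b) = 0 := by
    intro a b hab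
    have hab' : P a ∘ₗ P b = 0 := by
      fin_cases a <;> fin_cases b <;> first | (exact absurd rfl hab) | assumption
    have hc : ∀ x : V, P a (T x) = T (P a x) := by
      intro x
      exact (LinearMap.congr_fun (hTc a) x).symm
    have hz : ∀ x : V, P a (P b x) = 0 := fun x => LinearMap.congr_fun hab' x
    ext v
    simp only [LinearMap.comp_apply, LinearMap.zero_apply]
    rw [hc, hz, map_zero, map_zero]
  -- expansion of T^{⊗n}
  have hexp : tpowMap K V n T =
      ∑ f : Fin n → Fin 2, famMap K V n (fun i => T ∘ₗ P (f i)) := by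
    have hTsum : (fun _ : Fin n => T) = fun _ : Fin n => ∑ c : Fin 2, (T ∘ₗ P c) := by
      funext i
      rw [Fin.sum_univ_two, ← LinearMap.comp_add, hsum, LinearMap.comp_id]
    show PiTensorProduct.map (fun _ : Fin n => T) = _
    rw [hTsum]
    exact (PiTensorProduct.mapMultilinear K (fun _ : Fin n => V) (fun _ => V)).map_sum
      (g := fun _ c => T ∘ₗ P c)
  -- trace of each nonconstant term is zero
  have hvanish : ∀ f : Fin n → Fin 2, f ≠ (fun _ => 0) → f ≠ (fun _ => 1) →
      LinearMap.trace K (⨂[K] _ : Fin n, V)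
        (permMap K V n σ ∘ₗ famMap K V n (fun i => T ∘ₗ P (f i))) = 0 := by
    intro f h0 h1
    set A : Fin n → (V →ₗ[K] V) := fun i => T ∘ₗ P (f i) with hA
    -- find an adjacent difference along the orbit of i₀
    have hneq : ∃ j : ℕ, f ((σ ^ (j+1)) i₀) ≠ f ((σ ^ j) i₀) := by
      by_contra hcon
      push_neg at hcon
      have hconst : ∀ j : ℕ, f ((σ ^ j) i₀) = f i₀ := by
        intro j
        induction j with
        | zero => simp
        | succ j ih => rw [hcon j, ih]
      have hf : f = fun _ => f i₀ := by
        funext i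
        obtain ⟨k, hk⟩ := hσ i₀ i
        rw [← hk, hconst]
      rcases (by omega : f i₀ = 0 ∨ f i₀ = 1) with hc | hc
      · exact h0 (by rw [hf, hc])
      · exact h1 (by rw [hf, hc])
    obtain ⟨j, hj⟩ := hneq
    -- nilpotency
    have hDzero : Dfam K V n σ A (j+2) i₀ = 0 := by
      rw [Dfam_succ_eq, Dfam_succ_eq, ← LinearMap.comp_assoc]
      have hz : A ((σ ^ (j+1)) i₀) ∘ₗ A ((σ ^ j) i₀) = 0 := hzero _ _ hj
      rw [hz, LinearMap.zero_comp]
    have hmapzero : famMap K V n (Dfam K V n σ A (j+2)) = 0 := by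
      have := (PiTensorProduct.mapMultilinear K (fun _ : Fin n => V)
        (fun _ => V)).map_coord_zero (m := Dfam K V n σ A (j+2)) i₀ hDzero
      simpa [famMap] using this
    have hnil : IsNilpotent (permMap K V n σ ∘ₗ famMap K V n A) := by
      refine ⟨j+2, ?_⟩
      rw [pow_permMap_map, hmapzero, LinearMap.comp_zero]
    haveI := piTensor_finite K V n
    exact (LinearMap.isNilpotent_trace_of_isNilpotent hnil).eq_zero
  -- put it together
  have hmul : ∀ (g : (⨂[K] _ : Fin n, V) →ₗ[K] ⨂[K] _ : Fin n, V),
      permMap K V n σ ∘ₗ g = permMap K V n σ * g := fun _ => rfl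
  rw [hexp, hmul, Finset.mul_sum, map_sum]
  have hc01 : ((fun _ => 0) : Fin n → Fin 2) ≠ (fun _ => 1) := by
    intro h
    have := congrFun h i₀
    simp at this
  have hsub : ({(fun _ => 0), (fun _ => 1)} : Finset (Fin n → Fin 2)) ⊆ Finset.univ :=
    Finset.subset_univ _
  rw [← Finset.sum_subset hsub (by
    intro f _ hf
    simp only [Finset.mem_insert, Finset.mem_singleton] at hf
    push_neg at hf
    rw [← hmul]
    exact hvanish f hf.1 hf.2)]
  rw [Finset.sum_pair hc01, ← hmul, ← hmul]
  rfl
end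

section
/- Let K be a field, let V₁ and V₂ be finite-dimensional K-vector spaces, let T₁ ∈ End_K(V₁) and T₂ ∈ End_K(V₂), let n be a natural number and σ ∈ S_n. Then Tr(L_σ^{(n)} ∘ (T₁ ⊗ T₂)^{⊗n}) = Tr(L_σ^{(n)} ∘ T₁^{⊗n}) · Tr(L_σ^{(n)} ∘ T₂^{⊗n}), where on the left side L_σ^{(n)} and (T₁⊗T₂)^{⊗n} are endomorphisms of (V₁ ⊗ V₂)^{⊗n} and T₁ ⊗ T₂ denotes the induced endomorphism of V₁ ⊗ V₂. -/
open scoped TensorProduct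

namespace Stmt12Aux

open PiTensorProduct

section aux
variable (K : Type*) [Field K] (V : Type*) [AddCommGroup V] [Module K V]

/-- `⨂^{n+1} V ≃ V ⊗ ⨂^n V`. -/
noncomputable def succEquiv (n : ℕ) :
    (⨂[K] _ : Fin (n+1), V) ≃ₗ[K] V ⊗[K] (⨂[K] _ : Fin n, V) :=
  (reindex K (fun _ : Fin (n+1) => V)
      ((finCongr (Nat.add_comm n 1)).trans finSumFinEquiv.symm)).trans <|
    ((tmulEquiv (ι := Fin 1) (ι₂ := Fin n) K V).symm.trans
      (TensorProduct.congr (subsingletonEquiv (0 : Fin 1)) (LinearEquiv.refl K _)))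

@[simp] theorem succEquiv_tprod (n : ℕ) (f : Fin (n+1) → V) :
    succEquiv K V n (tprod K f) = f 0 ⊗ₜ[K] tprod K (fun i => f i.succ) := by
  simp [succEquiv, reindex_tprod, tmulEquiv_symm_apply]
  rfl

theorem free_pitensor (n : ℕ) : Module.Free K (⨂[K] _ : Fin n, V) := by
  induction n with
  | zero => exact Module.Free.of_equiv (isEmptyEquiv (Fin 0)).symm
  | succ n ih => exact letI := ih; Module.Free.of_equiv (succEquiv K V n).symm

theorem finite_pitensor [FiniteDimensional K V] (n : ℕ) :
    Module.Finite K (⨂[K] _ : Fin n, V) := by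
  induction n with
  | zero => exact Module.Finite.equiv (isEmptyEquiv (Fin 0)).symm
  | succ n ih => exact letI := ih; Module.Finite.equiv (succEquiv K V n).symm

end aux

section psi
variable (K : Type*) [Field K] (V₁ V₂ : Type*) [AddCommGroup V₁] [Module K V₁]
  [AddCommGroup V₂] [Module K V₂]

/-- `⨂^n (V₁ ⊗ V₂) ≃ (⨂^n V₁) ⊗ (⨂^n V₂)`. -/
noncomputable def psi : (n : ℕ) →
    (⨂[K] _ : Fin n, V₁ ⊗[K] V₂) ≃ₗ[K] (⨂[K] _ : Fin n, V₁) ⊗[K] (⨂[K] _ : Fin n, V₂)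
  | 0 => (isEmptyEquiv (Fin 0)).trans <| (TensorProduct.lid K K).symm.trans
      (TensorProduct.congr (isEmptyEquiv (Fin 0)).symm (isEmptyEquiv (Fin 0)).symm)
  | (n+1) => (succEquiv K (V₁ ⊗[K] V₂) n).trans <|
      (TensorProduct.congr (LinearEquiv.refl K (V₁ ⊗[K] V₂)) (psi n)).trans <|
      (TensorProduct.tensorTensorTensorComm K V₁ V₂ _ _).trans <|
      (TensorProduct.congr (succEquiv K V₁ n).symm (succEquiv K V₂ n).symm)

@[simp] theorem psi_tprod (n : ℕ) (v : Fin n → V₁) (w : Fin n → V₂) :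
    psi K V₁ V₂ n (tprod K (fun i => v i ⊗ₜ[K] w i)) = tprod K v ⊗ₜ[K] tprod K w := by
  induction n with
  | zero =>
      simp [psi]
      congr 1 <;> exact congrArg _ (Subsingleton.elim _ _)
  | succ n ih =>
      simp [psi, ih]
      congr 1 <;> exact (LinearEquiv.symm_apply_eq _).mpr (by simp)

theorem inter (T₁ : V₁ →ₗ[K] V₁) (T₂ : V₂ →ₗ[K] V₂) (n : ℕ) (σ : Equiv.Perm (Fin n)) :
    (psi K V₁ V₂ n).toLinearMap ∘ₗ
        (permMap K (V₁ ⊗[K] V₂) n σ ∘ₗ tpowMap K (V₁ ⊗[K] V₂) n (TensorProduct.map T₁ T₂)) =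
      TensorProduct.map (permMap K V₁ n σ ∘ₗ tpowMap K V₁ n T₁)
          (permMap K V₂ n σ ∘ₗ tpowMap K V₂ n T₂) ∘ₗ (psi K V₁ V₂ n).toLinearMap := by
  apply PiTensorProduct.ext
  apply Module.Basis.ext_multilinear
    (fun _ => (Module.Basis.ofVectorSpace K V₁).tensorProduct (Module.Basis.ofVectorSpace K V₂))
  intro v
  simp only [Module.Basis.tensorProduct_apply', MultilinearMap.compLinearMap_apply,
    LinearMap.compMultilinearMap_apply, LinearMap.comp_apply, permMap, tpowMap,
    PiTensorProduct.map_tprod, LinearEquiv.coe_coe, PiTensorProduct.reindex_tprod,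
    TensorProduct.map_tmul, psi_tprod]

end psi

end Stmt12Aux

open Stmt12Aux in
/-- `Tr(L_σ^{(n)} ∘ (T₁ ⊗ T₂)^{⊗n}) = Tr(L_σ^{(n)} ∘ T₁^{⊗n}) · Tr(L_σ^{(n)} ∘ T₂^{⊗n})`. -/
theorem stmt12 (K : Type*) [Field K] (V₁ V₂ : Type*) [AddCommGroup V₁] [Module K V₁]
    [AddCommGroup V₂] [Module K V₂] [FiniteDimensional K V₁] [FiniteDimensional K V₂]
    (T₁ : V₁ →ₗ[K] V₁) (T₂ : V₂ →ₗ[K] V₂) (n : ℕ) (σ : Equiv.Perm (Fin n)) :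
    LinearMap.trace K (⨂[K] _ : Fin n, V₁ ⊗[K] V₂)
        (permMap K (V₁ ⊗[K] V₂) n σ ∘ₗ tpowMap K (V₁ ⊗[K] V₂) n (TensorProduct.map T₁ T₂)) =
      LinearMap.trace K (⨂[K] _ : Fin n, V₁) (permMap K V₁ n σ ∘ₗ tpowMap K V₁ n T₁) *
        LinearMap.trace K (⨂[K] _ : Fin n, V₂) (permMap K V₂ n σ ∘ₗ tpowMap K V₂ n T₂) := by
  haveI := free_pitensor K V₁ n
  haveI := free_pitensor K V₂ n
  haveI := finite_pitensor K V₁ n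
  haveI := finite_pitensor K V₂ n
  have h := inter K V₁ V₂ T₁ T₂ n σ
  have hF : permMap K (V₁ ⊗[K] V₂) n σ ∘ₗ tpowMap K (V₁ ⊗[K] V₂) n (TensorProduct.map T₁ T₂) =
      (psi K V₁ V₂ n).symm.conj (TensorProduct.map (permMap K V₁ n σ ∘ₗ tpowMap K V₁ n T₁)
        (permMap K V₂ n σ ∘ₗ tpowMap K V₂ n T₂)) := by
    apply LinearMap.ext; intro x
    have hx := LinearMap.congr_fun h x
    simp only [LinearMap.comp_apply, LinearEquiv.coe_coe] at hx
    simp [LinearEquiv.conj_apply, ← hx]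
  rw [hF, LinearMap.trace_conj', LinearMap.trace_tensorProduct']
end

section
/- Let K be an algebraically closed field of characteristic zero, G a finite group, and H a subgroup of G. Let V be a simple finite-dimensional K[H]-module, and let e ∈ K[H] be an element that is central in K[H], satisfies e² = e, acts as the identity on V, and acts as zero on every simple K[H]-module not isomorphic to V. Regard e as an element of K[G] via the inclusion K[H] ⊆ K[G], and set Z := (1/(|G| · dim_K V)) Σ_{x ∈ G} x e x⁻¹ ∈ K[G]. Then Z is central in K[G], and for every simple finite-dimensional K[G]-module W, Z acts on W as scalar multiplication by dim_K Hom_{K[H]}(V, Res_H W) / dim_K W, where Res_H W is W viewed as a K[H]-module via the inclusion K[H] ⊆ K[G]. -/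
universe u

/-- The inclusion `K[H] → K[G]` of group algebras induced by the inclusion of a subgroup
`H ≤ G`. -/
noncomputable def groupAlgebraInclusion (K : Type u) [Field K] (G : Type u) [Group G]
    (H : Subgroup G) : MonoidAlgebra K ↥H →+* MonoidAlgebra K G :=
  (MonoidAlgebra.mapDomainAlgHom K K H.subtype).toRingHom

/-- The element `Z = (1/(|G|·dim V)) Σ_{x ∈ G} x e x⁻¹` of `K[G]`, where `e ∈ K[H]` is
regarded as an element of `K[G]` and `dV` stands for `dim_K V`. -/
noncomputable def averagedIdempotent (K : Type u) [Field K] (G : Type u) [Group G] [Fintype G]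
    (H : Subgroup G) (e : MonoidAlgebra K ↥H) (dV : ℕ) : MonoidAlgebra K G :=
  ((Fintype.card G : K) * (dV : K))⁻¹ •
    ∑ x : G, MonoidAlgebra.single x (1 : K) * groupAlgebraInclusion K G H e *
      MonoidAlgebra.single x⁻¹ (1 : K)

lemma aux_smulComm (K A M : Type u) [Field K] [Ring A] [Algebra K A] [AddCommGroup M]
    [Module K M] [Module A M] [IsScalarTower K A M] : SMulCommClass A K M := by
  constructor
  intro a k m
  rw [← algebraMap_smul A k m, ← mul_smul, ← Algebra.commutes, mul_smul, algebraMap_smul]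

lemma schur_scalar (K A M : Type u) [Field K] [IsAlgClosed K] [Ring A] [Algebra K A]
    [AddCommGroup M] [Module K M] [Module A M] [IsScalarTower K A M]
    [FiniteDimensional K M] [IsSimpleModule A M]
    (φ : M →ₗ[A] M) : ∃ c : K, ∀ m : M, φ m = c • m := by
  have : Nontrivial M := IsSimpleModule.nontrivial A M
  obtain ⟨c, hc⟩ := Module.End.exists_eigenvalue (φ.restrictScalars K : Module.End K M)
  obtain ⟨m₀, hm₀⟩ := hc.exists_hasEigenvector
  refine ⟨c, ?_⟩
  let p : Submodule A M :=
    { carrier := {m | φ m = c • m}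
      add_mem' := fun {x y} hx hy => by
        simp only [Set.mem_setOf_eq] at *
        rw [map_add, hx, hy, smul_add]
      zero_mem' := by simp
      smul_mem' := fun a m hm => by
        simp only [Set.mem_setOf_eq] at *
        rw [map_smul, hm, ← algebraMap_smul A c m, ← mul_smul, ← Algebra.commutes,
          mul_smul, algebraMap_smul] }
  have hp : p = ⊤ := by
    rcases eq_bot_or_eq_top p with h | h
    · exfalso
      have hmem : m₀ ∈ p := hm₀.apply_eq_smul
      rw [h, Submodule.mem_bot] at hmem
      exact hm₀.2 hmem
    · exact h
  intro m
  have hm : m ∈ p := hp ▸ Submodule.mem_top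
  exact hm

lemma schur_end_one (K A M : Type u) [Field K] [IsAlgClosed K] [Ring A] [Algebra K A]
    [AddCommGroup M] [Module K M] [Module A M] [IsScalarTower K A M] [SMulCommClass A K M]
    [FiniteDimensional K M] [IsSimpleModule A M] :
    Module.finrank K (M →ₗ[A] M) = 1 := by
  have : Nontrivial M := IsSimpleModule.nontrivial A M
  obtain ⟨m₀, hm₀⟩ := exists_ne (0 : M)
  let ψ : K →ₗ[K] (M →ₗ[A] M) :=
    { toFun := fun c => c • (LinearMap.id : M →ₗ[A] M)
      map_add' := fun a b => add_smul a b _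
      map_smul' := fun a b => by simp [mul_smul] }
  have hbij : Function.Bijective ψ := by
    constructor
    · intro a b hab
      have h : a • m₀ = b • m₀ := LinearMap.congr_fun hab m₀
      by_contra hne
      have h2 : (a - b) • m₀ = 0 := by rw [sub_smul, h, sub_self]
      rcases smul_eq_zero.mp h2 with h' | h'
      · exact hne (sub_eq_zero.mp h')
      · exact hm₀ h'
    · intro f
      obtain ⟨c, hc⟩ := schur_scalar K A M f
      exact ⟨c, by ext m; simp [ψ, hc m]⟩
  rw [← Module.finrank_self K]
  exact ((LinearEquiv.ofBijective ψ hbij).finrank_eq).symm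

/-- Composition with an `A`-linear equivalence of codomains, as a `K`-linear equivalence of
hom spaces. -/
def homCongr (K : Type u) {A V N N' : Type u} [Field K] [Ring A] [Algebra K A]
    [AddCommGroup V] [Module A V]
    [AddCommGroup N] [AddCommGroup N'] [Module K N] [Module K N'] [Module A N] [Module A N']
    [IsScalarTower K A N] [IsScalarTower K A N'] [SMulCommClass A K N] [SMulCommClass A K N']
    (g : N ≃ₗ[A] N') : (V →ₗ[A] N) ≃ₗ[K] (V →ₗ[A] N') where
  toFun f := g.toLinearMap ∘ₗ f
  invFun f := g.symm.toLinearMap ∘ₗ f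
  map_add' f₁ f₂ := by ext v; simp
  map_smul' k f := by
    ext v
    simp only [LinearMap.comp_apply, LinearMap.smul_apply, LinearEquiv.coe_coe,
      RingHom.id_apply]
    exact g.toLinearMap.map_smul_of_tower k (f v)
  left_inv f := by ext v; simp
  right_inv f := by ext v; simp


lemma hom_finrank_add (K A V M : Type u) [Field K] [Ring A] [Algebra K A]
    [AddCommGroup V] [Module K V] [Module A V] [IsScalarTower K A V] [FiniteDimensional K V]
    [AddCommGroup M] [Module K M] [Module A M]
    [IsScalarTower K A M] [SMulCommClass A K M] [FiniteDimensional K M]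
    (S S' : Submodule A M) (h : IsCompl S S') :
    Module.finrank K (V →ₗ[A] M) =
      Module.finrank K (V →ₗ[A] ↥S) + Module.finrank K (V →ₗ[A] ↥S') := by
  haveI : FiniteDimensional K ↥S :=
    FiniteDimensional.of_injective (S.subtype.restrictScalars K) Subtype.coe_injective
  haveI : FiniteDimensional K ↥S' :=
    FiniteDimensional.of_injective (S'.subtype.restrictScalars K) Subtype.coe_injective
  haveI : Module.Finite K (V →ₗ[A] ↥S) :=
    FiniteDimensional.of_injective
      (LinearMap.restrictScalarsₗ (R := K) (S := A) (M := V) (N := ↥S) (R₁ := K))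
      (LinearMap.restrictScalars_injective K)
  haveI : Module.Finite K (V →ₗ[A] ↥S') :=
    FiniteDimensional.of_injective
      (LinearMap.restrictScalarsₗ (R := K) (S := A) (M := V) (N := ↥S') (R₁ := K))
      (LinearMap.restrictScalars_injective K)
  have E1 : ((V →ₗ[A] ↥S) × (V →ₗ[A] ↥S')) ≃ₗ[K] (V →ₗ[A] (↥S × ↥S')) :=
    LinearMap.prodEquiv K
  have E2 : (V →ₗ[A] (↥S × ↥S')) ≃ₗ[K] (V →ₗ[A] M) :=
    homCongr K (Submodule.prodEquivOfIsCompl S S' h)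
  have E3 : Module.finrank K ((V →ₗ[A] ↥S) × (V →ₗ[A] ↥S')) =
      Module.finrank K (V →ₗ[A] M) := (E1.trans E2).finrank_eq
  rw [Module.finrank_prod] at E3
  exact E3.symm

lemma isotypic_dim (K : Type u) [Field K] [IsAlgClosed K] [CharZero K]
    (Γ : Type u) [Group Γ] [Fintype Γ]
    (V : Type u) [AddCommGroup V] [Module K V] [Module (MonoidAlgebra K Γ) V]
    [IsScalarTower K (MonoidAlgebra K Γ) V] [FiniteDimensional K V]
    [IsSimpleModule (MonoidAlgebra K Γ) V]
    (e : MonoidAlgebra K Γ)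
    (hzero : ∀ (U : Type u) [AddCommGroup U] [Module (MonoidAlgebra K Γ) U],
      IsSimpleModule (MonoidAlgebra K Γ) U → ¬Nonempty (U ≃ₗ[MonoidAlgebra K Γ] V) →
        ∀ u : U, e • u = 0) :
    ∀ (n : ℕ) (M : Type u) [AddCommGroup M] [Module K M] [Module (MonoidAlgebra K Γ) M]
      [IsScalarTower K (MonoidAlgebra K Γ) M] [FiniteDimensional K M],
      Module.finrank K M ≤ n → (∀ m : M, e • m = m) →
      Module.finrank K M =
        Module.finrank K V * Module.finrank K (V →ₗ[MonoidAlgebra K Γ] M) := by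
  haveI : SMulCommClass (MonoidAlgebra K Γ) K V := aux_smulComm K _ V
  intro n
  induction n with
  | zero =>
    intro M _ _ _ _ _ hle _
    haveI : SMulCommClass (MonoidAlgebra K Γ) K M := aux_smulComm K _ M
    have h0 : Module.finrank K M = 0 := Nat.le_zero.mp hle
    haveI : Subsingleton M := Module.finrank_zero_iff.mp h0
    haveI : Subsingleton (V →ₗ[MonoidAlgebra K Γ] M) :=
      ⟨fun f g => by ext v; exact Subsingleton.elim _ _⟩
    have hh : Module.finrank K (V →ₗ[MonoidAlgebra K Γ] M) = 0 :=
      Module.finrank_zero_of_subsingleton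
    rw [h0, hh, mul_zero]
  | succ n ih =>
    intro M _ _ _ _ _ hle hM
    haveI : SMulCommClass (MonoidAlgebra K Γ) K M := aux_smulComm K _ M
    rcases subsingleton_or_nontrivial M with hs | hs
    · haveI : Subsingleton (V →ₗ[MonoidAlgebra K Γ] M) :=
        ⟨fun f g => by ext v; exact Subsingleton.elim _ _⟩
      have hh : Module.finrank K (V →ₗ[MonoidAlgebra K Γ] M) = 0 :=
        Module.finrank_zero_of_subsingleton
      have h0 : Module.finrank K M = 0 := Module.finrank_zero_of_subsingleton
      rw [h0, hh, mul_zero]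
    · haveI : NeZero ((Fintype.card Γ : K)) := ⟨Nat.cast_ne_zero.mpr Fintype.card_ne_zero⟩
      obtain ⟨S, hSsimple⟩ :=
        IsSemisimpleModule.exists_simple_submodule (MonoidAlgebra K Γ) M
      haveI := hSsimple
      obtain ⟨S', hcompl⟩ := MonoidAlgebra.Submodule.exists_isCompl S
      haveI : FiniteDimensional K ↥S :=
        FiniteDimensional.of_injective (S.subtype.restrictScalars K) Subtype.coe_injective
      haveI : FiniteDimensional K ↥S' :=
        FiniteDimensional.of_injective (S'.subtype.restrictScalars K) Subtype.coe_injective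
      haveI : SMulCommClass (MonoidAlgebra K Γ) K ↥S := by
        constructor
        intro a k m
        apply Subtype.ext
        show a • k • (m : M) = k • a • (m : M)
        exact smul_comm a k (m : M)
      haveI : SMulCommClass (MonoidAlgebra K Γ) K ↥S' := by
        constructor
        intro a k m
        apply Subtype.ext
        show a • k • (m : M) = k • a • (m : M)
        exact smul_comm a k (m : M)
      -- `S` is isomorphic to `V`
      have hiso : Nonempty (↥S ≃ₗ[MonoidAlgebra K Γ] V) := by
        by_contra hn
        have hkill := hzero ↥S hSsimple hn
        haveI : Nontrivial ↥S := IsSimpleModule.nontrivial (MonoidAlgebra K Γ) ↥S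
        obtain ⟨s, hs0⟩ := exists_ne (0 : ↥S)
        apply hs0
        have h1 : ((e • s : ↥S) : M) = e • (s : M) := rfl
        have h2 : e • (s : M) = (s : M) := hM s
        have h3 := hkill s
        rw [h3] at h1
        exact Subtype.ext (by rw [← h2, ← h1, Submodule.coe_zero])
      obtain ⟨g⟩ := hiso
      have hdimS : Module.finrank K ↥S = Module.finrank K V :=
        (g.restrictScalars K).finrank_eq
      have hSV1 : Module.finrank K (V →ₗ[MonoidAlgebra K Γ] ↥S) = 1 := by
        rw [(homCongr K g (V := V)).finrank_eq]
        exact schur_end_one K (MonoidAlgebra K Γ) V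
      -- `e` acts as identity on `S'`
      have hM' : ∀ m : ↥S', e • m = m := fun m =>
        Subtype.ext (show e • (m : M) = (m : M) from hM m)
      -- rank additivity
      have hranks : Module.finrank K M = Module.finrank K ↥S + Module.finrank K ↥S' := by
        rw [← ((Submodule.prodEquivOfIsCompl S S' hcompl).restrictScalars K).finrank_eq,
          Module.finrank_prod]
      haveI : Nontrivial ↥S := IsSimpleModule.nontrivial (MonoidAlgebra K Γ) ↥S
      have hposS : 0 < Module.finrank K ↥S := Module.finrank_pos
      have hle' : Module.finrank K ↥S' ≤ n := by omega
      have ihS' := ih ↥S' hle' hM'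
      have hhom : Module.finrank K (V →ₗ[MonoidAlgebra K Γ] M) =
          Module.finrank K (V →ₗ[MonoidAlgebra K Γ] ↥S) +
            Module.finrank K (V →ₗ[MonoidAlgebra K Γ] ↥S') := by
        exact hom_finrank_add K (MonoidAlgebra K Γ) V M S S' hcompl
      rw [hranks, hdimS, ihS', hhom, hSV1, mul_add, mul_one]



lemma averaged_central (K : Type u) [Field K] (G : Type u) [Group G] [Fintype G]
    (H : Subgroup G) (e : MonoidAlgebra K ↥H) (dV : ℕ) (y : MonoidAlgebra K G) :
    averagedIdempotent K G H e dV * y = y * averagedIdempotent K G H e dV := by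
  set E := groupAlgebraInclusion K G H e with hE
  set Sm := ∑ x : G, MonoidAlgebra.single x (1 : K) * E * MonoidAlgebra.single x⁻¹ (1 : K)
    with hSm
  have key : ∀ g : G, MonoidAlgebra.single g (1 : K) * Sm = Sm * MonoidAlgebra.single g 1 := by
    intro g
    rw [hSm, Finset.mul_sum, Finset.sum_mul]
    refine Fintype.sum_equiv (Equiv.mulLeft g) _ _ (fun x => ?_)
    have h1 : MonoidAlgebra.single g (1 : K) * (MonoidAlgebra.single x (1 : K) * E *
        MonoidAlgebra.single x⁻¹ (1 : K)) =
        MonoidAlgebra.single (g * x) (1 : K) * E * MonoidAlgebra.single x⁻¹ (1 : K) := by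
      rw [← mul_assoc, ← mul_assoc, MonoidAlgebra.single_mul_single, one_mul]
    have h2 : MonoidAlgebra.single (g * x) (1 : K) * E *
        MonoidAlgebra.single (g * x)⁻¹ (1 : K) * MonoidAlgebra.single g (1 : K) =
        MonoidAlgebra.single (g * x) (1 : K) * E * MonoidAlgebra.single x⁻¹ (1 : K) := by
      rw [mul_assoc, MonoidAlgebra.single_mul_single, one_mul]
      congr 2
      group
    rw [h1, ← h2]
    rfl
  have hy : Sm * y = y * Sm := by
    induction y using MonoidAlgebra.induction_linear with
    | zero => simp
    | add f g hf hg => rw [mul_add, add_mul, hf, hg]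
    | single a b =>
      have hab : (MonoidAlgebra.single a b : MonoidAlgebra K G) =
          MonoidAlgebra.single a (1 : K) * MonoidAlgebra.single 1 b := by
        rw [MonoidAlgebra.single_mul_single, mul_one, one_mul]
      show Sm * MonoidAlgebra.single a b = MonoidAlgebra.single a b * Sm
      rw [hab, ← mul_assoc, ← key a, mul_assoc, ← MonoidAlgebra.single_one_comm, ← mul_assoc]
  show (((Fintype.card G : K) * (dV : K))⁻¹ • Sm) * y = y * (((Fintype.card G : K) * (dV : K))⁻¹ • Sm)
  rw [smul_mul_assoc, mul_smul_comm, hy]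

lemma averaged_action (K : Type u) [Field K] [IsAlgClosed K] [CharZero K]
    (G : Type u) [Group G] [Fintype G] (H : Subgroup G)
    (V : Type u) [AddCommGroup V] [Module K V] [Module (MonoidAlgebra K ↥H) V]
    [IsScalarTower K (MonoidAlgebra K ↥H) V] [FiniteDimensional K V]
    [IsSimpleModule (MonoidAlgebra K ↥H) V]
    (e : MonoidAlgebra K ↥H)
    (hcentral : ∀ x : MonoidAlgebra K ↥H, e * x = x * e)
    (hidem : e * e = e)
    (hV : ∀ v : V, e • v = v)
    (hzero : ∀ (U : Type u) [AddCommGroup U] [Module (MonoidAlgebra K ↥H) U],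
      IsSimpleModule (MonoidAlgebra K ↥H) U → ¬Nonempty (U ≃ₗ[MonoidAlgebra K ↥H] V) →
        ∀ u : U, e • u = 0)
    (W : Type u) [AddCommGroup W] [Module K W] [Module (MonoidAlgebra K G) W]
    [IsScalarTower K (MonoidAlgebra K G) W] [SMulCommClass (MonoidAlgebra K G) K W]
    [FiniteDimensional K W] (hWs : IsSimpleModule (MonoidAlgebra K G) W) (w : W) :
    averagedIdempotent K G H e (Module.finrank K V) • w =
      ((Module.finrank K (V →ₛₗ[groupAlgebraInclusion K G H] W) : K) /
        (Module.finrank K W : K)) • w := by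
  haveI := hWs
  haveI : Fintype ↥H := Fintype.ofFinite ↥H
  set ι := groupAlgebraInclusion K G H with hι
  set dV := Module.finrank K V with hdV
  set Z := averagedIdempotent K G H e dV with hZ
  -- Z acts as a scalar `c`
  have hZc : ∀ y : MonoidAlgebra K G, Z * y = y * Z := fun y => averaged_central K G H e dV y
  let φZ : W →ₗ[MonoidAlgebra K G] W :=
    { toFun := fun x => Z • x
      map_add' := fun a b => smul_add Z a b
      map_smul' := fun b x => by
        show Z • b • x = b • Z • x
        rw [← mul_smul, hZc b, mul_smul] }
  obtain ⟨c, hc⟩ := schur_scalar K (MonoidAlgebra K G) W φZ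
  -- the action as an algebra morphism
  let θ : MonoidAlgebra K G →ₐ[K] Module.End K W := Algebra.lsmul K K W
  have htrZ : LinearMap.trace K W (θ Z) = c * (Module.finrank K W : K) := by
    have h1 : θ Z = c • (1 : Module.End K W) := by
      apply LinearMap.ext; intro x
      show Z • x = c • x
      exact hc x
    rw [h1, map_smul, LinearMap.trace_one, smul_eq_mul]
  -- restricted `K[H]`-module structure on `W`
  letI instA : Module (MonoidAlgebra K ↥H) W := Module.compHom W (ι : _ →+* _)
  haveI instTower : IsScalarTower K (MonoidAlgebra K ↥H) W := by
    constructor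
    intro k a x
    show (ι (k • a)) • x = k • (ι a • x)
    have h2 : ι (algebraMap K (MonoidAlgebra K ↥H) k) = algebraMap K (MonoidAlgebra K G) k :=
      (MonoidAlgebra.mapDomainAlgHom K K H.subtype).commutes k
    rw [Algebra.smul_def k a, map_mul, h2, mul_smul, algebraMap_smul]
  haveI instSC : SMulCommClass (MonoidAlgebra K ↥H) K W := by
    constructor
    intro a k x
    show ι a • (k • x) = k • (ι a • x)
    exact smul_comm (ι a) k x
  -- the image of the projector, as a `K[H]`-submodule
  let ψ : W →ₗ[MonoidAlgebra K ↥H] W :=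
    { toFun := fun x => e • x
      map_add' := fun a b => smul_add e a b
      map_smul' := fun a x => by
        show e • a • x = a • e • x
        rw [← mul_smul, hcentral a, mul_smul] }
  let M' : Submodule (MonoidAlgebra K ↥H) W := LinearMap.range ψ
  haveI : FiniteDimensional K ↥M' :=
    FiniteDimensional.of_injective (M'.subtype.restrictScalars K) Subtype.coe_injective
  have he' : ∀ m : ↥M', e • m = m := by
    rintro ⟨m, y, rfl⟩
    apply Subtype.ext
    show e • (e • y) = e • y
    rw [← mul_smul, hidem]
  have hiso := isotypic_dim K ↥H V e hzero (Module.finrank K ↥M') ↥M' le_rfl he'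
  -- identify hom spaces
  haveI : SMulCommClass (MonoidAlgebra K ↥H) K ↥M' := by
    constructor
    intro a k m
    apply Subtype.ext
    show a • k • (m : W) = k • a • (m : W)
    exact smul_comm a k (m : W)
  let E1 : (V →ₛₗ[ι] W) ≃ₗ[K] (V →ₗ[MonoidAlgebra K ↥H] W) :=
    { toFun := fun f =>
        { toFun := f, map_add' := f.map_add, map_smul' := fun a v => f.map_smulₛₗ a v }
      invFun := fun f =>
        { toFun := f, map_add' := f.map_add, map_smul' := fun a v => f.map_smul a v }
      map_add' := fun f g => rfl
      map_smul' := fun k f => rfl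
      left_inv := fun f => rfl
      right_inv := fun f => rfl }
  have hmem : ∀ (f : V →ₗ[MonoidAlgebra K ↥H] W) (v : V), f v ∈ M' := by
    intro f v
    refine ⟨f v, ?_⟩
    show e • f v = f v
    rw [← f.map_smul, hV v]
  let E2 : (V →ₗ[MonoidAlgebra K ↥H] W) ≃ₗ[K] (V →ₗ[MonoidAlgebra K ↥H] ↥M') :=
    { toFun := fun f => f.codRestrict M' (hmem f)
      invFun := fun g => M'.subtype.comp g
      map_add' := fun f g => by ext v; rfl
      map_smul' := fun k f => by ext v; rfl
      left_inv := fun f => by ext v; rfl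
      right_inv := fun g => by ext v; rfl }
  have hdim1 : Module.finrank K (V →ₛₗ[ι] W) =
      Module.finrank K (V →ₗ[MonoidAlgebra K ↥H] ↥M') := (E1.trans E2).finrank_eq
  -- the projector as an endomorphism and its trace
  set P : Module.End K W := θ (ι e) with hP
  have hproj : LinearMap.IsProj (LinearMap.range P) P := by
    constructor
    · intro x
      exact LinearMap.mem_range_self P x
    · rintro x ⟨y, rfl⟩
      show P (P y) = P y
      rw [← Module.End.mul_apply, ← map_mul, ← map_mul, hidem]
  have htrP : LinearMap.trace K W P = (Module.finrank K ↥(LinearMap.range P) : K) :=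
    hproj.trace
  have hrange : Module.finrank K ↥(LinearMap.range P) = Module.finrank K ↥M' := by
    refine LinearEquiv.finrank_eq
      { toFun := fun x => ⟨x.1, by obtain ⟨y, h⟩ := x.2; exact ⟨y, h⟩⟩
        invFun := fun x => ⟨x.1, by obtain ⟨y, h⟩ := x.2; exact ⟨y, h⟩⟩
        map_add' := fun a b => rfl
        map_smul' := fun k a => rfl
        left_inv := fun a => rfl
        right_inv := fun a => rfl }
  -- trace of θ Z by averaging
  have hθZ : LinearMap.trace K W (θ Z) =
      ((Fintype.card G : K) * (dV : K))⁻¹ *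
        ((Fintype.card G : K) * LinearMap.trace K W P) := by
    have hZexp : Z = ((Fintype.card G : K) * (dV : K))⁻¹ •
        ∑ x : G, MonoidAlgebra.single x (1 : K) * ι e * MonoidAlgebra.single x⁻¹ (1 : K) := rfl
    let T : MonoidAlgebra K G →ₗ[K] K := (LinearMap.trace K W).comp θ.toLinearMap
    have hterm : ∀ x : G,
        T (MonoidAlgebra.single x (1 : K) * ι e * MonoidAlgebra.single x⁻¹ (1 : K)) =
          LinearMap.trace K W P := by
      intro x
      show LinearMap.trace K W
        (θ (MonoidAlgebra.single x (1 : K) * ι e * MonoidAlgebra.single x⁻¹ (1 : K))) = _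
      simp only [map_mul]
      rw [LinearMap.trace_mul_comm, ← mul_assoc, ← map_mul,
        MonoidAlgebra.single_mul_single, inv_mul_cancel, one_mul]
      have h1 : (MonoidAlgebra.single (1 : G) (1 : K)) = (1 : MonoidAlgebra K G) := rfl
      rw [h1, map_one, one_mul]
    have hTZ : LinearMap.trace K W (θ Z) = T Z := rfl
    rw [hTZ, hZexp, map_smul, map_sum, smul_eq_mul]
    congr 1
    rw [Finset.sum_congr rfl (fun x _ => hterm x), Finset.sum_const, Finset.card_univ,
      nsmul_eq_mul]
  -- nonvanishing
  haveI : Nontrivial V := IsSimpleModule.nontrivial (MonoidAlgebra K ↥H) V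
  haveI : Nontrivial W := IsSimpleModule.nontrivial (MonoidAlgebra K G) W
  have hdV0 : (dV : K) ≠ 0 := Nat.cast_ne_zero.mpr Module.finrank_pos.ne'
  have hcard0 : ((Fintype.card G : K)) ≠ 0 := Nat.cast_ne_zero.mpr Fintype.card_ne_zero
  have hdW0 : ((Module.finrank K W : K)) ≠ 0 :=
    Nat.cast_ne_zero.mpr Module.finrank_pos.ne'
  -- put everything together
  have hfinal : c * (Module.finrank K W : K) =
      (Module.finrank K (V →ₛₗ[ι] W) : K) := by
    rw [← htrZ, hθZ, htrP, hrange, hiso, hdim1]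
    push_cast
    field_simp
    ring
  have hgoal : c = (Module.finrank K (V →ₛₗ[ι] W) : K) / (Module.finrank K W : K) := by
    rw [eq_div_iff hdW0, hfinal]
  rw [show Z • w = c • w from hc w, hgoal]


/-- with `e ∈ K[H]` the central idempotent of a simple `K[H]`-module `V`,
the element `Z = (1/(|G|·dim V)) Σ_{x ∈ G} x e x⁻¹` is central in `K[G]`, and on every
simple finite-dimensional `K[G]`-module `W` it acts as scalar multiplication by
`dim_K Hom_{K[H]}(V, Res_H W) / dim_K W`. -/
theorem stmt14 (K : Type u) [Field K] [IsAlgClosed K] [CharZero K]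
    (G : Type u) [Group G] [Fintype G] (H : Subgroup G)
    (V : Type u) [AddCommGroup V] [Module K V] [Module (MonoidAlgebra K ↥H) V]
    [IsScalarTower K (MonoidAlgebra K ↥H) V] [FiniteDimensional K V]
    [IsSimpleModule (MonoidAlgebra K ↥H) V]
    (e : MonoidAlgebra K ↥H)
    (hcentral : ∀ x : MonoidAlgebra K ↥H, e * x = x * e)
    (hidem : e * e = e)
    (hV : ∀ v : V, e • v = v)
    (hzero : ∀ (U : Type u) [AddCommGroup U] [Module (MonoidAlgebra K ↥H) U],
      IsSimpleModule (MonoidAlgebra K ↥H) U → ¬Nonempty (U ≃ₗ[MonoidAlgebra K ↥H] V) →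
        ∀ u : U, e • u = 0) :
    (∀ y : MonoidAlgebra K G,
        averagedIdempotent K G H e (Module.finrank K V) * y =
          y * averagedIdempotent K G H e (Module.finrank K V)) ∧
    (∀ (W : Type u) [AddCommGroup W] [Module K W] [Module (MonoidAlgebra K G) W]
        [IsScalarTower K (MonoidAlgebra K G) W] [SMulCommClass (MonoidAlgebra K G) K W]
        [FiniteDimensional K W], IsSimpleModule (MonoidAlgebra K G) W →
      ∀ w : W, averagedIdempotent K G H e (Module.finrank K V) • w =
        ((Module.finrank K (V →ₛₗ[groupAlgebraInclusion K G H] W) : K) /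
          (Module.finrank K W : K)) • w) := by
  constructor
  · intro y
    exact averaged_central K G H e (Module.finrank K V) y
  · intro W _ _ _ _ _ _ hWs w
    exact averaged_action K G H V e hcentral hidem hV hzero W hWs w
end

section
/- Let K be a field of characteristic zero and d ≥ 1. For each k with 1 ≤ k ≤ d, let t_k be the polynomial in the d² variables x_{ij} (1 ≤ i,j ≤ d) whose value at any matrix A ∈ M_d(K) is Tr(A^k). Then the polynomials t_1, t_2, …, t_d are algebraically independent over K. -/
open MvPolynomial

/-- A surjective ring endomorphism of a Noetherian ring is injective. -/
theorem hopfian_ring {A : Type*} [CommRing A] [IsNoetherianRing A] (f : A →+* A)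
    (hf : Function.Surjective f) : Function.Injective f := by
  have hmono : Monotone fun n : ℕ => RingHom.ker (f ^ n) := by
    refine monotone_nat_of_le_succ fun n x hx => ?_
    simp only [RingHom.mem_ker, RingHom.coe_pow] at hx ⊢
    rw [Function.iterate_succ_apply', hx, map_zero]
  obtain ⟨N, hN⟩ := monotone_stabilizes_iff_noetherian.mpr
    (inferInstance : IsNoetherianRing A) ⟨fun n : ℕ => RingHom.ker (f ^ n), hmono⟩
  rw [injective_iff_map_eq_zero]
  intro x hx
  have hs : Function.Surjective (f^[N]) := Function.Surjective.iterate hf N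
  obtain ⟨y, hy⟩ := hs x
  have hmem : y ∈ RingHom.ker (f ^ (N + 1)) := by
    simp only [RingHom.mem_ker, RingHom.coe_pow, Function.iterate_succ_apply', hy, hx]
  have := hN (N + 1) (Nat.le_succ N)
  simp only [OrderHom.coe_mk] at this
  rw [← this] at hmem
  simpa only [RingHom.mem_ker, RingHom.coe_pow, hy] using hmem

/-- In characteristic zero, each elementary symmetric polynomial `e_k` (for `k ≤ d`) lies
in the subalgebra generated by the power sums `p_1, …, p_d`, by Newton's identities. -/
theorem esymm_mem_adjoin_psum (K : Type*) [Field K] [CharZero K] (d : ℕ) :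
    ∀ k : ℕ, k ≤ d → esymm (Fin d) K k ∈
      Algebra.adjoin K (Set.range fun i : Fin d => psum (Fin d) K ((i : ℕ) + 1)) := by
  intro k
  induction k using Nat.strong_induction_on with
  | _ k ih =>
    intro hkd
    rcases Nat.eq_zero_or_pos k with rfl | hk
    · rw [esymm_zero]; exact one_mem _
    have hnewton := mul_esymm_eq_sum (Fin d) K k
    have hsmul : (k : K) • esymm (Fin d) K k = (k : MvPolynomial (Fin d) K) * esymm (Fin d) K k := by
      rw [smul_eq_C_mul]; norm_cast
    have hk0 : (k : K) ≠ 0 := Nat.cast_ne_zero.mpr hk.ne'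
    have : esymm (Fin d) K k = (k : K)⁻¹ • ((k : MvPolynomial (Fin d) K) * esymm (Fin d) K k) := by
      rw [← hsmul, smul_smul, inv_mul_cancel₀ hk0, one_smul]
    rw [this, hnewton]
    apply Subalgebra.smul_mem
    apply mul_mem
    · exact pow_mem (neg_mem (one_mem _)) _
    apply sum_mem
    rintro ⟨a, b⟩ hab
    simp only [Finset.mem_filter, Finset.HasAntidiagonal.mem_antidiagonal] at hab
    obtain ⟨habk, halt⟩ := hab
    have hb1 : 1 ≤ b := by omega
    have hbd : b ≤ d := by omega
    refine mul_mem (mul_mem (pow_mem (neg_mem (one_mem _)) _) (ih a (by omega) (by omega))) ?_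
    have : psum (Fin d) K b = psum (Fin d) K (((⟨b - 1, by omega⟩ : Fin d) : ℕ) + 1) := by
      congr 1; simp; omega
    rw [this]
    exact Algebra.subset_adjoin ⟨⟨b - 1, by omega⟩, rfl⟩

/-- In characteristic zero, the power sums `p_1, …, p_d` in `d` variables are
algebraically independent. -/
theorem psum_algIndep (K : Type*) [Field K] [CharZero K] (d : ℕ) :
    AlgebraicIndependent K (fun k : Fin d => psum (Fin d) K ((k : ℕ) + 1)) := by
  set E : MvPolynomial (Fin d) K →ₐ[K] MvPolynomial (Fin d) K :=
    aeval (fun i : Fin d => esymm (Fin d) K ((i : ℕ) + 1)) with hEdef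
  set P : MvPolynomial (Fin d) K →ₐ[K] MvPolynomial (Fin d) K :=
    aeval (fun i : Fin d => psum (Fin d) K ((i : ℕ) + 1)) with hPdef
  have hE : Function.Injective E := by
    intro p q h
    have h2 : esymmAlgHom (Fin d) K d p = esymmAlgHom (Fin d) K d q := by
      apply Subtype.coe_injective
      show ((esymmAlgHom (Fin d) K d) p : MvPolynomial (Fin d) K) = (esymmAlgHom (Fin d) K d) q
      rw [esymmAlgHom_apply, esymmAlgHom_apply]
      exact h
    exact esymmAlgHom_fin_injective K le_rfl h2
  -- the esymms are in the range of P
  have hq : ∀ k : Fin d, ∃ q, P q = esymm (Fin d) K ((k : ℕ) + 1) := by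
    intro k
    have hmem := esymm_mem_adjoin_psum K d ((k : ℕ) + 1) k.2
    rw [Algebra.adjoin_range_eq_range_aeval, AlgHom.mem_range] at hmem
    exact hmem
  choose q hqspec using hq
  -- the psums are in the range of E
  have hr : ∀ k : Fin d, ∃ r, E r = psum (Fin d) K ((k : ℕ) + 1) := by
    intro k
    obtain ⟨r, hrr⟩ := (esymmAlgHom_fin_bijective K d).2
      ⟨psum (Fin d) K ((k : ℕ) + 1), psum_isSymmetric _ _ _⟩
    exact ⟨r, by rw [← esymmAlgHom_apply, hrr]⟩
  choose r hrspec using hr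
  set Ψ : MvPolynomial (Fin d) K →ₐ[K] MvPolynomial (Fin d) K := aeval q with hΨdef
  set Φ : MvPolynomial (Fin d) K →ₐ[K] MvPolynomial (Fin d) K := aeval r with hΦdef
  have hPΨ : P.comp Ψ = E := by
    apply MvPolynomial.algHom_ext
    intro i
    simp only [AlgHom.comp_apply, hΨdef, hEdef, aeval_X, hqspec]
  have hEΦ : E.comp Φ = P := by
    apply MvPolynomial.algHom_ext
    intro i
    simp only [AlgHom.comp_apply, hΦdef, hPdef, aeval_X, hrspec]
  have hΦΨ : ∀ p, Φ (Ψ p) = p := by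
    intro p
    apply hE
    have h1 : E (Φ (Ψ p)) = (E.comp Φ) (Ψ p) := rfl
    have h2 : (P.comp Ψ) p = E p := by rw [hPΨ]
    rw [h1, hEΦ]
    exact h2
  have hΦsurj : Function.Surjective Φ := fun p => ⟨Ψ p, hΦΨ p⟩
  have hΦinj : Function.Injective Φ := hopfian_ring Φ.toRingHom hΦsurj
  have hP : Function.Injective P := by
    rw [← hEΦ]
    exact hE.comp hΦinj
  exact algebraicIndependent_iff_injective_aeval.mpr hP

/-- The generic `d × d` matrix whose entries are the variables `x_{ij}`. -/
noncomputable def genericMatrix (K : Type*) [Field K] (d : ℕ) :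
    Matrix (Fin d) (Fin d) (MvPolynomial (Fin d × Fin d) K) :=
  Matrix.of fun i j => MvPolynomial.X (i, j)

/-- over a field of characteristic zero, the trace polynomials
`t_k = Tr(X^k)` for `1 ≤ k ≤ d` of a generic `d × d` matrix `X` are algebraically
independent over `K`. -/
theorem stmt16 (K : Type*) [Field K] [CharZero K] (d : ℕ) (hd : 1 ≤ d) :
    AlgebraicIndependent K
      (fun k : Fin d => Matrix.trace (genericMatrix K d ^ ((k : ℕ) + 1))) := by
  set D : MvPolynomial (Fin d × Fin d) K →ₐ[K] MvPolynomial (Fin d) K :=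
    aeval (fun p : Fin d × Fin d => if p.1 = p.2 then X p.1 else 0) with hDdef
  apply AlgebraicIndependent.of_comp D
  have key : (⇑D ∘ fun k : Fin d => Matrix.trace (genericMatrix K d ^ ((k : ℕ) + 1)))
      = fun k : Fin d => psum (Fin d) K ((k : ℕ) + 1) := by
    funext k
    have hmap : (genericMatrix K d).map D = Matrix.diagonal fun i : Fin d => X i := by
      ext i j
      simp only [Matrix.map_apply, genericMatrix, Matrix.of_apply, hDdef, aeval_X,
        Matrix.diagonal_apply]
    have hpow : (genericMatrix K d ^ ((k : ℕ) + 1)).map D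
        = ((genericMatrix K d).map D) ^ ((k : ℕ) + 1) := by
      have := map_pow (AlgHom.mapMatrix (m := Fin d) D) (genericMatrix K d) ((k : ℕ) + 1)
      simpa [AlgHom.mapMatrix_apply] using this
    have htrace : D (Matrix.trace (genericMatrix K d ^ ((k : ℕ) + 1)))
        = Matrix.trace ((genericMatrix K d ^ ((k : ℕ) + 1)).map D) := by
      simp [Matrix.trace, Matrix.diag, map_sum]
    simp only [Function.comp_apply, htrace, hpow, hmap, Matrix.diagonal_pow,
      Matrix.trace_diagonal, psum, Pi.pow_apply]
  rw [key]
  exact psum_algIndep K d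
end
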